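/- arXiv:1907.04706 — 4 statements merged into one kernel-verified Lean document; each statement's English description precedes it below -/
import Mathlib

section
/- The planar control system ẋ = y² + y u₁, ẏ = 2y − u₁ + x u₂ is not α-STLC at the equilibrium (0, (0, u₂^eq)) for any α ≥ 0 and any u₂^eq ∈ ℝ, where 0 = (0,0) ∈ ℝ². -/
open MeasureTheory Set

noncomputable section

/-- The state space `ℝⁿ` with the Euclidean norm. -/
abbrev Vec (n : ℕ) : Type := EuclideanSpace ℝ (Fin n)

/-- Lie bracket of vector fields on `ℝⁿ`: `[f,g](x) = Dg(x)·f(x) − Df(x)·g(x)`. -/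
def lieBr {n : ℕ} (f g : Vec n → Vec n) : Vec n → Vec n :=
  fun x => fderiv ℝ g x (f x) - fderiv ℝ f x (g x)

/-- Formal iterated-bracket expressions in `m` symbols. -/
inductive BrExpr (m : ℕ) : Type
  | leaf : Fin m → BrExpr m
  | br : BrExpr m → BrExpr m → BrExpr m

namespace BrExpr

/-- Evaluation of a formal bracket expression on vector fields. -/
def eval {n m : ℕ} (f : Fin m → Vec n → Vec n) : BrExpr m → Vec n → Vec n
  | leaf i => f i
  | br a b => lieBr (eval f a) (eval f b)

/-- Number of occurrences of the symbol `i` in a bracket expression. -/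
def count {m : ℕ} (i : Fin m) : BrExpr m → ℕ
  | leaf j => if j = i then 1 else 0
  | br a b => count i a + count i b

end BrExpr

/-- `u` is (a.e.) measurable and a.e. bounded by `C` on `[0, ε]`:
an `L^∞([0,ε])` membership together with `‖u‖_{L^∞} ≤ C`. -/
def MeasBdd (ε C : ℝ) (u : ℝ → ℝ) : Prop :=
  AEStronglyMeasurable u (volume.restrict (Icc 0 ε)) ∧
    ∀ᵐ t ∂(volume.restrict (Icc 0 ε)), |u t| ≤ C

/-- `u` belongs to `W^{1,∞}([0,ε])` with `‖u‖_{L^∞} + ‖u'‖_{L^∞} ≤ C`: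
`u` is bounded by some `M` and Lipschitz with some constant `L` on `[0,ε]`,
where `M + L ≤ C`. -/
def W1Bdd (ε C : ℝ) (u : ℝ → ℝ) : Prop :=
  ∃ M L : ℝ, 0 ≤ M ∧ 0 ≤ L ∧ (∀ t ∈ Icc (0:ℝ) ε, |u t| ≤ M) ∧
    LipschitzOnWith (Real.toNNReal L) u (Icc 0 ε) ∧ M + L ≤ C

/-- `z` is a solution of `ż = f₀(z) + u₁ f₁(z) + u₂ f₂(z)` on `[0,ε]`
(absolutely continuous with the prescribed a.e. derivative, in integral form). -/
def IsSol2 {n : ℕ} (f₀ f₁ f₂ : Vec n → Vec n) (u₁ u₂ : ℝ → ℝ) (ε : ℝ) (z : ℝ → Vec n) : Prop :=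
  ContinuousOn z (Icc 0 ε) ∧
    ∀ t ∈ Icc (0:ℝ) ε,
      z t = z 0 + ∫ s in (0:ℝ)..t, (f₀ (z s) + u₁ s • f₁ (z s) + u₂ s • f₂ (z s))

/-- `R₁(0)`: the span of the values at `0` of all iterated Lie brackets of
`f₀, f₁, f₂` containing `f₁` at most one time. -/
def R1span {n : ℕ} (f₀ f₁ f₂ : Vec n → Vec n) : Submodule ℝ (Vec n) :=
  Submodule.span ℝ {v | ∃ b : BrExpr 3, b.count 1 ≤ 1 ∧ b.eval ![f₀, f₁, f₂] 0 = v}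

/-- `α`-STLC at the equilibrium `(0,(0,u2eq))` for the two-input system
`ż = g₀(z) + u₁ g₁(z) + u₂ g₂(z)`: controls with
`max(‖u₁‖_{L^∞}, ‖u₂ − u₂^eq‖_{L^∞}) ≤ α + ε`. -/
def AlphaSTLC2 {n : ℕ} (g₀ g₁ g₂ : Vec n → Vec n) (u2eq α : ℝ) : Prop :=
  ∀ ε > (0:ℝ), ∃ η > (0:ℝ), ∀ z₀ ∈ Metric.ball (0 : Vec n) η, ∀ z₁ ∈ Metric.ball (0 : Vec n) η,
    ∃ (u₁ u₂ : ℝ → ℝ) (z : ℝ → Vec n),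
      MeasBdd ε (α + ε) u₁ ∧ MeasBdd ε (α + ε) (fun t => u₂ t - u2eq) ∧
      IsSol2 g₀ g₁ g₂ u₁ u₂ ε z ∧ z 0 = z₀ ∧ z ε = z₁

/-- helper: a vector in `Vec 2`. -/
def vec2 (a b : ℝ) : Vec 2 := !₂[a, b]

lemma vec2_zero (a b : ℝ) : (vec2 a b) 0 = a := rfl
lemma vec2_one (a b : ℝ) : (vec2 a b) 1 = b := rfl

lemma norm_vec2_le (a b : ℝ) : ‖vec2 a b‖ ≤ |a| + |b| := by
  rw [EuclideanSpace.norm_eq]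
  rw [show (∑ i, ‖(vec2 a b) i‖^2) = a^2+b^2 by norm_num [vec2, Fin.sum_univ_two, sq_abs]]
  have h : a^2 + b^2 ≤ (|a|+|b|)^2 := by
    nlinarith [mul_nonneg (abs_nonneg a) (abs_nonneg b), sq_abs a, sq_abs b]
  calc √(a^2+b^2) ≤ √((|a|+|b|)^2) := Real.sqrt_le_sqrt h
    _ = |a|+|b| := Real.sqrt_sq (by positivity)

lemma vec2_decomp (a b : ℝ) : vec2 a b = a • vec2 1 0 + b • vec2 0 1 := by
  ext i
  fin_cases i <;>
    simp [vec2, PiLp.add_apply, PiLp.smul_apply, smul_eq_mul]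

lemma integrableOn_of_bdd {f : ℝ → ℝ} {s : Set ℝ}
    (hm : AEStronglyMeasurable f (volume.restrict s)) {C : ℝ}
    (hb : ∀ᵐ t ∂(volume.restrict s), |f t| ≤ C) (hs : volume s ≠ ⊤) :
    IntegrableOn f s volume := by
  refine Integrable.mono' (g := fun _ => C) ?_ hm ?_
  · exact integrableOn_const hs
  · simpa [Real.norm_eq_abs] using hb

lemma sq_integral_eq (T : ℝ) (hT : 0 ≤ T) (h : ℝ → ℝ) (hi : IntegrableOn h (Ioc 0 T)) :
    (∫ s in Ioc (0:ℝ) T, h s) ^ 2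
      = 2 * ∫ s in Ioc (0:ℝ) T, (∫ r in Ioc (0:ℝ) s, h r) * h s := by
  set μ := volume.restrict (Ioc (0:ℝ) T) with hμ
  set C := ∫ s in Ioc (0:ℝ) T, h s with hC
  set F : ℝ → ℝ := fun s => ∫ r in Ioc (0:ℝ) s, h r with hF
  set K : ℝ × ℝ → ℝ :=
    Set.indicator {q : ℝ × ℝ | q.1 ≤ q.2} (fun p => h p.1 * h p.2) with hK
  have hi' : Integrable h μ := hi
  have hKint : Integrable K (μ.prod μ) :=
    (hi'.mul_prod hi').indicator (measurableSet_le measurable_fst measurable_snd)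
  have claim1 : ∀ s ∈ Ioc (0:ℝ) T, (∫ r, K (r, s) ∂μ) = F s * h s := by
    intro s hs
    have e1 : (fun r => K (r, s)) = Set.indicator (Iic s) (fun r => h r * h s) := by
      funext r
      simp only [hK, Set.indicator_apply, Set.mem_setOf_eq, Set.mem_Iic]
    rw [e1, integral_indicator measurableSet_Iic, hμ,
      Measure.restrict_restrict measurableSet_Iic]
    have e2 : Iic s ∩ Ioc 0 T = Ioc 0 s := by
      ext r
      simp only [mem_inter_iff, mem_Iic, mem_Ioc]
      exact ⟨fun ⟨h1, h2, h3⟩ => ⟨h2, h1⟩, fun ⟨h1, h2⟩ => ⟨h2, h1, h2.trans hs.2⟩⟩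
    rw [e2, integral_mul_const]
  have claim2 : ∀ r ∈ Ioc (0:ℝ) T, (∫ s, K (r, s) ∂μ) = h r * (C - F r) := by
    intro r hr
    have e1 : (fun s => K (r, s)) = Set.indicator (Ici r) (fun s => h r * h s) := by
      funext s
      simp only [hK, Set.indicator_apply, Set.mem_setOf_eq, Set.mem_Ici]
    rw [e1, integral_indicator measurableSet_Ici, hμ,
      Measure.restrict_restrict measurableSet_Ici]
    have e2 : Ici r ∩ Ioc 0 T = Icc r T := by
      ext s
      simp only [mem_inter_iff, mem_Ici, mem_Ioc, mem_Icc]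
      exact ⟨fun ⟨h1, _, h3⟩ => ⟨h1, h3⟩, fun ⟨h1, h2⟩ => ⟨h1, hr.1.trans_le h1, h2⟩⟩
    rw [e2, integral_const_mul, integral_Icc_eq_integral_Ioc]
    have hsplit : F r + ∫ s in Ioc r T, h s = C := by
      rw [hC, hF, ← setIntegral_union (Ioc_disjoint_Ioc_of_le le_rfl) measurableSet_Ioc
        (hi.mono_set (Ioc_subset_Ioc le_rfl hr.2)) (hi.mono_set (Ioc_subset_Ioc hr.1.le le_rfl)),
        Ioc_union_Ioc_eq_Ioc hr.1.le hr.2]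
    have : (∫ s in Ioc r T, h s) = C - F r := by linarith
    rw [this]
  have hmemae : ∀ᵐ t ∂μ, t ∈ Ioc (0:ℝ) T := ae_restrict_mem measurableSet_Ioc
  have h1 : (∫ p, K p ∂(μ.prod μ)) = ∫ s, F s * h s ∂μ := by
    rw [integral_prod_symm _ hKint]
    exact integral_congr_ae (hmemae.mono fun s hs => by simpa using claim1 s hs)
  have h2 : (∫ p, K p ∂(μ.prod μ)) = ∫ r, h r * (C - F r) ∂μ := by
    rw [integral_prod _ hKint]
    exact integral_congr_ae (hmemae.mono fun r hr => by simpa using claim2 r hr)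
  have hRint : Integrable (fun s => F s * h s) μ := by
    refine (hKint.integral_prod_right).congr ?_
    exact hmemae.mono fun s hs => by simpa using claim1 s hs
  have hRint' : Integrable (fun r => h r * (C - F r)) μ := by
    refine (hKint.integral_prod_left).congr ?_
    exact hmemae.mono fun r hr => by simpa using claim2 r hr
  have hsub : (∫ r, h r * (C - F r) ∂μ) = C * C - ∫ s, F s * h s ∂μ := by
    have e : (fun r => h r * (C - F r)) = fun r => C * h r - F r * h r := by
      funext r; ring
    rw [e, integral_sub ((hi'.const_mul C)) hRint, integral_const_mul]
  have : (∫ s, F s * h s ∂μ) = C * C - ∫ s, F s * h s ∂μ := by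
    calc (∫ s, F s * h s ∂μ) = ∫ p, K p ∂(μ.prod μ) := h1.symm
      _ = ∫ r, h r * (C - F r) ∂μ := h2
      _ = C * C - ∫ s, F s * h s ∂μ := hsub
  have : C ^ 2 = 2 * ∫ s, F s * h s ∂μ := by nlinarith [this]
  exact this

set_option maxHeartbeats 4000000

/-- The planar system `ẋ = y² + y u₁`, `ẏ = 2y − u₁ + x u₂` is not `α`-STLC at
`((0,0),(0,u₂^eq))` for any `α ≥ 0` and any `u₂^eq ∈ ℝ`. -/
theorem stmt10 :
    ∀ α : ℝ, 0 ≤ α → ∀ u2eq : ℝ,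
      ¬ AlphaSTLC2 (fun z : Vec 2 => !₂[(z 1) ^ 2, 2 * z 1])
        (fun z : Vec 2 => !₂[z 1, -1])
        (fun z : Vec 2 => !₂[0, z 0]) u2eq α := by
  intro α hα u2eq hS
  set A : ℝ := α + 1 + |u2eq| with hAdef
  have hA1 : 1 ≤ A := by have := abs_nonneg u2eq; simp only [hAdef]; linarith
  set ε : ℝ := 1 / (8 * A ^ 2) with hεdef
  have hε : 0 < ε := by positivity
  have hεA : ε * (8 * A ^ 2) = 1 := by
    rw [hεdef]; field_simp
  have hε1 : ε ≤ 1 := by nlinarith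
  have hbnd1 : (1 + A) * ε ≤ 1/2 := by
    have key1 : 0 ≤ ε * (4*A^2 - A - 1) := mul_nonneg hε.le (by nlinarith)
    nlinarith [hεA, key1]
  have hbnd2 : (2 + 2*A) * ε ≤ 1/2 := by
    have key2 : 0 ≤ ε * (4*A^2 - 2*A - 2) := mul_nonneg hε.le (by nlinarith)
    nlinarith [hεA, key2]
  have hA14 : A * (1 + A) * ε ≤ 1/4 := by
    have key : 0 ≤ ε * (2*A^2 - A*(1+A)) := mul_nonneg hε.le (by nlinarith)
    nlinarith [hεA, key]
  obtain ⟨η, hη, H⟩ := hS ε hε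
  have h0mem : (0 : Vec 2) ∈ Metric.ball (0 : Vec 2) η := by simpa using hη
  have hz₁mem : vec2 (-(η/2)) 0 ∈ Metric.ball (0 : Vec 2) η := by
    rw [Metric.mem_ball, dist_zero_right]
    calc ‖vec2 (-(η/2)) 0‖ ≤ |(-(η/2))| + |(0:ℝ)| := norm_vec2_le _ _
      _ < η := by rw [abs_neg, abs_of_nonneg (by linarith), abs_zero]; linarith
  obtain ⟨u₁, u₂, z, ⟨hu₁m, hu₁b⟩, ⟨hu₂m, hu₂b⟩, ⟨hzc, hzeq⟩, hz0, hzε⟩ :=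
    H 0 h0mem (vec2 (-(η/2)) 0) hz₁mem
  set δ : ℝ := η / 2 with hδdef
  have hδ : 0 < δ := by positivity
  set x : ℝ → ℝ := fun t => z t 0 with hxdef
  set y : ℝ → ℝ := fun t => z t 1 with hydef
  have hxc : ContinuousOn x (Icc 0 ε) :=
    (EuclideanSpace.proj (0 : Fin 2)).continuous.comp_continuousOn hzc
  have hyc : ContinuousOn y (Icc 0 ε) :=
    (EuclideanSpace.proj (1 : Fin 2)).continuous.comp_continuousOn hzc
  have hxaesm : AEStronglyMeasurable x (volume.restrict (Icc 0 ε)) :=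
    hxc.aestronglyMeasurable measurableSet_Icc
  have hyaesm : AEStronglyMeasurable y (volume.restrict (Icc 0 ε)) :=
    hyc.aestronglyMeasurable measurableSet_Icc
  have hu₁A : ∀ᵐ t ∂(volume.restrict (Icc (0:ℝ) ε)), |u₁ t| ≤ A := by
    filter_upwards [hu₁b] with t ht
    have := abs_nonneg u2eq
    calc |u₁ t| ≤ α + ε := ht
      _ ≤ A := by simp only [hAdef]; linarith
  have hu₂A : ∀ᵐ t ∂(volume.restrict (Icc (0:ℝ) ε)), |u₂ t| ≤ A := by
    filter_upwards [hu₂b] with t ht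
    calc |u₂ t| = |(u₂ t - u2eq) + u2eq| := by ring_nf
      _ ≤ |u₂ t - u2eq| + |u2eq| := abs_add_le _ _
      _ ≤ (α + ε) + |u2eq| := by linarith [ht]
      _ ≤ A := by simp only [hAdef]; linarith
  -- the scalar components of the vector field along the solution
  set h₁ : ℝ → ℝ := fun s => (y s)^2 + u₁ s * y s with hh₁def
  set h₂ : ℝ → ℝ := fun s => 2 * y s - u₁ s + u₂ s * x s with hh₂def
  set G : ℝ → Vec 2 := fun s => vec2 (h₁ s) (h₂ s) with hGdef
  have hGeq : ∀ s : ℝ,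
      ((fun z : Vec 2 => !₂[(z 1) ^ 2, 2 * z 1]) (z s)
        + u₁ s • (fun z : Vec 2 => !₂[z 1, -1]) (z s)
        + u₂ s • (fun z : Vec 2 => !₂[0, z 0]) (z s)) = G s := by
    intro s
    ext i
    fin_cases i <;>
      simp [hGdef, hh₁def, hh₂def, vec2, PiLp.add_apply, PiLp.smul_apply, smul_eq_mul,
        hxdef, hydef] <;> ring
  have hzeq' : ∀ t ∈ Icc (0:ℝ) ε, z t = z 0 + ∫ s in (0:ℝ)..t, G s := by
    intro t ht
    rw [hzeq t ht]
    congr 1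
    exact intervalIntegral.integral_congr (fun s _ => hGeq s)
  -- measurability of G
  have hh₁aesm : AEStronglyMeasurable h₁ (volume.restrict (Icc 0 ε)) := by
    exact ((continuous_pow 2).comp_aestronglyMeasurable hyaesm).add (hu₁m.mul hyaesm)
  have hu₂m' : AEStronglyMeasurable u₂ (volume.restrict (Icc 0 ε)) := by
    have h' := hu₂m.add (aestronglyMeasurable_const (b := u2eq))
    have e : ((fun t => u₂ t - u2eq) + fun _ => u2eq) = u₂ := by funext t; simp
    rwa [e] at h'
  have hh₂aesm : AEStronglyMeasurable h₂ (volume.restrict (Icc 0 ε)) := by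
    exact (((aestronglyMeasurable_const (b := (2:ℝ))).mul hyaesm).sub hu₁m).add (hu₂m'.mul hxaesm)
  have hGaesm : AEStronglyMeasurable G (volume.restrict (Icc 0 ε)) := by
    have e : G = fun s => h₁ s • vec2 1 0 + h₂ s • vec2 0 1 := by
      funext s; exact vec2_decomp _ _
    rw [e]
    exact (hh₁aesm.smul_const _).add (hh₂aesm.smul_const _)
  -- bounds on the solution from compactness
  obtain ⟨Bx, hBx⟩ : ∃ B : ℝ, ∀ t ∈ Icc (0:ℝ) ε, |x t| ≤ B := by
    obtain ⟨B, hB⟩ := isCompact_Icc.exists_bound_of_continuousOn hxc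
    exact ⟨B, fun t ht => by simpa [Real.norm_eq_abs] using hB t ht⟩
  obtain ⟨By, hBy⟩ : ∃ B : ℝ, ∀ t ∈ Icc (0:ℝ) ε, |y t| ≤ B := by
    obtain ⟨B, hB⟩ := isCompact_Icc.exists_bound_of_continuousOn hyc
    exact ⟨B, fun t ht => by simpa [Real.norm_eq_abs] using hB t ht⟩
  have hBx0 : 0 ≤ Bx := le_trans (abs_nonneg _) (hBx 0 ⟨le_refl _, hε.le⟩)
  have hBy0 : 0 ≤ By := le_trans (abs_nonneg _) (hBy 0 ⟨le_refl _, hε.le⟩)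
  have hA0 : (0:ℝ) ≤ A := by linarith
  -- integrability of G
  have hGbdd : ∀ᵐ s ∂(volume.restrict (Icc (0:ℝ) ε)),
      ‖G s‖ ≤ (By^2 + A*By) + (2*By + A + A*Bx) := by
    filter_upwards [hu₁A, hu₂A, ae_restrict_mem measurableSet_Icc] with s hb1 hb2 hs
    have hxB := hBx s hs
    have hyB := hBy s hs
    have hy0 := abs_nonneg (y s)
    have hx0 := abs_nonneg (x s)
    have e1 : |h₁ s| ≤ By^2 + A*By := by
      calc |h₁ s| ≤ |(y s)^2| + |u₁ s * y s| := abs_add_le _ _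
        _ = |y s|^2 + |u₁ s| * |y s| := by rw [abs_mul, abs_of_nonneg (sq_nonneg (y s)), ← sq_abs]
        _ ≤ By^2 + A*By := by nlinarith [abs_nonneg (u₁ s)]
    have e2 : |h₂ s| ≤ 2*By + A + A*Bx := by
      have t0 : |2 * y s - u₁ s| ≤ |2 * y s| + |u₁ s| := by
        calc |2 * y s - u₁ s| = |2 * y s + -(u₁ s)| := by ring_nf
          _ ≤ |2 * y s| + |-(u₁ s)| := abs_add_le _ _
          _ = |2 * y s| + |u₁ s| := by rw [abs_neg]
      have t2 : |2 * y s| = 2 * |y s| := by rw [abs_mul, abs_two]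
      have t3 : |u₂ s * x s| = |u₂ s| * |x s| := abs_mul _ _
      calc |h₂ s| ≤ |2 * y s - u₁ s| + |u₂ s * x s| := abs_add_le _ _
        _ ≤ 2*By + A + A*Bx := by
            rw [t3]
            nlinarith [abs_nonneg (u₂ s), abs_nonneg (u₁ s)]
    calc ‖G s‖ ≤ |h₁ s| + |h₂ s| := norm_vec2_le _ _
      _ ≤ _ := by linarith
  have hGint : IntegrableOn G (Icc (0:ℝ) ε) volume := by
    refine Integrable.mono' (g := fun _ => (By^2 + A*By) + (2*By + A + A*Bx)) ?_ hGaesm hGbdd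
    exact integrableOn_const measure_Icc_lt_top.ne
  -- component formulas
  have hz00 : z 0 = 0 := hz0
  have hKprep : ∀ t ∈ Icc (0:ℝ) ε, IntervalIntegrable G volume 0 t := fun t ht =>
    (intervalIntegrable_iff_integrableOn_Ioc_of_le ht.1).mpr
      (hGint.mono_set (fun s hs => ⟨hs.1.le, hs.2.trans ht.2⟩))
  have keyx : ∀ t ∈ Icc (0:ℝ) ε, x t = ∫ s in (0:ℝ)..t, h₁ s := by
    intro t ht
    have h0 := hzeq' t ht
    rw [hz00, zero_add] at h0
    calc x t = EuclideanSpace.proj (0 : Fin 2) (z t) := rfl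
      _ = EuclideanSpace.proj (0 : Fin 2) (∫ s in (0:ℝ)..t, G s) := by rw [h0]
      _ = ∫ s in (0:ℝ)..t, EuclideanSpace.proj (0 : Fin 2) (G s) :=
          ((EuclideanSpace.proj (0 : Fin 2)).intervalIntegral_comp_comm (hKprep t ht)).symm
      _ = ∫ s in (0:ℝ)..t, h₁ s := rfl
  have keyy : ∀ t ∈ Icc (0:ℝ) ε, y t = ∫ s in (0:ℝ)..t, h₂ s := by
    intro t ht
    have h0 := hzeq' t ht
    rw [hz00, zero_add] at h0
    calc y t = EuclideanSpace.proj (1 : Fin 2) (z t) := rfl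
      _ = EuclideanSpace.proj (1 : Fin 2) (∫ s in (0:ℝ)..t, G s) := by rw [h0]
      _ = ∫ s in (0:ℝ)..t, EuclideanSpace.proj (1 : Fin 2) (G s) :=
          ((EuclideanSpace.proj (1 : Fin 2)).intervalIntegral_comp_comm (hKprep t ht)).symm
      _ = ∫ s in (0:ℝ)..t, h₂ s := rfl
  -- scalar integrabilities on Icc 0 ε
  have hIccvol : volume (Icc (0:ℝ) ε) ≠ ⊤ := measure_Icc_lt_top.ne
  have hy2int : IntegrableOn (fun s => (y s)^2) (Icc (0:ℝ) ε) volume :=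
    (hyc.pow 2).integrableOn_Icc
  have hyabsint : IntegrableOn (fun s => |y s|) (Icc (0:ℝ) ε) volume :=
    hyc.abs.integrableOn_Icc
  have hu₁yint : IntegrableOn (fun s => u₁ s * y s) (Icc (0:ℝ) ε) volume := by
    refine integrableOn_of_bdd (hu₁m.mul hyaesm) (C := A * By) ?_ hIccvol
    filter_upwards [hu₁A, ae_restrict_mem measurableSet_Icc] with s hb hs
    rw [abs_mul]
    exact mul_le_mul hb (hBy s hs) (abs_nonneg _) hA0
  have hu₁int : IntegrableOn u₁ (Icc (0:ℝ) ε) volume :=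
    integrableOn_of_bdd hu₁m hu₁A hIccvol
  have hu₂xint : IntegrableOn (fun s => u₂ s * x s) (Icc (0:ℝ) ε) volume := by
    refine integrableOn_of_bdd (hu₂m'.mul hxaesm) (C := A * Bx) ?_ hIccvol
    filter_upwards [hu₂A, ae_restrict_mem measurableSet_Icc] with s hb hs
    rw [abs_mul]
    exact mul_le_mul hb (hBx s hs) (abs_nonneg _) hA0
  have hu₂xyint : IntegrableOn (fun s => u₂ s * x s * y s) (Icc (0:ℝ) ε) volume := by
    refine integrableOn_of_bdd ((hu₂m'.mul hxaesm).mul hyaesm) (C := A * Bx * By) ?_ hIccvol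
    filter_upwards [hu₂A, ae_restrict_mem measurableSet_Icc] with s hb hs
    rw [abs_mul, abs_mul]
    exact mul_le_mul (mul_le_mul hb (hBx s hs) (abs_nonneg _) hA0) (hBy s hs)
      (abs_nonneg _) (mul_nonneg hA0 hBx0)
  have hh₁int : IntegrableOn h₁ (Icc (0:ℝ) ε) volume := hy2int.add hu₁yint
  have hh₂int : IntegrableOn h₂ (Icc (0:ℝ) ε) volume := by
    have h2y : IntegrableOn (fun s => 2 * y s) (Icc (0:ℝ) ε) volume :=
      (continuousOn_const.mul hyc).integrableOn_Icc
    exact (h2y.sub hu₁int).add hu₂xint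
  -- a priori bound on the trajectory
  have hone : ∀ t ∈ Icc (0:ℝ) ε, |x t| ≤ 1 ∧ |y t| ≤ 1 := by
    by_contra hcon
    push_neg at hcon
    obtain ⟨t₀, ht₀, hbad₀⟩ := hcon
    set Bad : Set ℝ := Icc 0 ε ∩ (fun t => max |x t| |y t|) ⁻¹' (Ici 1) with hBadDef
    have memBad : ∀ t ∈ Icc (0:ℝ) ε, (¬ (|x t| ≤ 1 ∧ |y t| ≤ 1)) → t ∈ Bad := by
      intro t ht hb
      refine ⟨ht, ?_⟩
      simp only [mem_preimage, mem_Ici]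
      push_neg at hb
      rcases le_or_gt (|x t|) 1 with h | h
      · exact le_trans (hb h).le (le_max_right _ _)
      · exact le_trans h.le (le_max_left _ _)
    have ht₀Bad : t₀ ∈ Bad := memBad t₀ ht₀ (by
      intro hc; exact absurd (hbad₀ hc.1) (not_lt.mpr hc.2))
    have hBadClosed : IsClosed Bad :=
      (continuous_max.comp_continuousOn (hxc.abs.prodMk hyc.abs)).preimage_isClosed_of_isClosed isClosed_Icc isClosed_Ici
    have hBadBdd : BddBelow Bad := ⟨0, fun t ht => ht.1.1⟩
    have hTBad : sInf Bad ∈ Bad := hBadClosed.csInf_mem ⟨t₀, ht₀Bad⟩ hBadBdd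
    set T := sInf Bad with hTdef
    have hTIcc : T ∈ Icc (0:ℝ) ε := hTBad.1
    have hT1 : 1 ≤ max |x T| |y T| := hTBad.2
    have hsmall : ∀ s ∈ Ico (0:ℝ) T, |x s| ≤ 1 ∧ |y s| ≤ 1 := by
      intro s hs
      by_contra h'
      have hsIcc : s ∈ Icc (0:ℝ) ε := ⟨hs.1, le_trans hs.2.le hTIcc.2⟩
      exact absurd (csInf_le hBadBdd (memBad s hsIcc h')) (not_le.mpr hs.2)
    have hIooIcc : Ioo (0:ℝ) T ⊆ Icc 0 ε := fun s hs => ⟨hs.1.le, hs.2.le.trans hTIcc.2⟩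
    have hxT : |x T| ≤ (1 + A) * ε := by
      rw [keyx T hTIcc, intervalIntegral.integral_of_le hTIcc.1, integral_Ioc_eq_integral_Ioo]
      have hint : IntegrableOn h₁ (Ioo (0:ℝ) T) volume := hh₁int.mono_set hIooIcc
      calc |∫ s in Ioo (0:ℝ) T, h₁ s| ≤ ∫ s in Ioo (0:ℝ) T, |h₁ s| := by
            simpa [Real.norm_eq_abs] using
              norm_integral_le_integral_norm (μ := volume.restrict (Ioo (0:ℝ) T)) h₁
        _ ≤ ∫ _s in Ioo (0:ℝ) T, (1 + A) := by
            refine integral_mono_ae hint.abs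
              (integrableOn_const measure_Ioo_lt_top.ne) ?_
            filter_upwards [ae_restrict_of_ae_restrict_of_subset hIooIcc hu₁A,
              ae_restrict_mem measurableSet_Ioo] with s hu hs
            have hy1 := (hsmall s ⟨hs.1.le, hs.2⟩).2
            have e : |h₁ s| ≤ |y s|^2 + |u₁ s| * |y s| := by
              calc |h₁ s| ≤ |(y s)^2| + |u₁ s * y s| := abs_add_le _ _
                _ = |y s|^2 + |u₁ s| * |y s| := by
                    rw [abs_mul, abs_of_nonneg (sq_nonneg (y s)), ← sq_abs]
            nlinarith [abs_nonneg (y s), abs_nonneg (u₁ s)]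
        _ = (1 + A) * T := by
            rw [setIntegral_const, smul_eq_mul, Real.volume_real_Ioo_of_le hTIcc.1]
            ring
        _ ≤ (1 + A) * ε := by
            have := mul_le_mul_of_nonneg_left hTIcc.2 (show (0:ℝ) ≤ 1 + A by linarith)
            linarith
    have hyT : |y T| ≤ (2 + 2*A) * ε := by
      rw [keyy T hTIcc, intervalIntegral.integral_of_le hTIcc.1, integral_Ioc_eq_integral_Ioo]
      have hint : IntegrableOn h₂ (Ioo (0:ℝ) T) volume := hh₂int.mono_set hIooIcc
      calc |∫ s in Ioo (0:ℝ) T, h₂ s| ≤ ∫ s in Ioo (0:ℝ) T, |h₂ s| := by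
            simpa [Real.norm_eq_abs] using
              norm_integral_le_integral_norm (μ := volume.restrict (Ioo (0:ℝ) T)) h₂
        _ ≤ ∫ _s in Ioo (0:ℝ) T, (2 + 2*A) := by
            refine integral_mono_ae hint.abs
              (integrableOn_const measure_Ioo_lt_top.ne) ?_
            filter_upwards [ae_restrict_of_ae_restrict_of_subset hIooIcc hu₁A,
              ae_restrict_of_ae_restrict_of_subset hIooIcc hu₂A,
              ae_restrict_mem measurableSet_Ioo] with s hu1 hu2 hs
            have hy1 := (hsmall s ⟨hs.1.le, hs.2⟩).2
            have hx1 := (hsmall s ⟨hs.1.le, hs.2⟩).1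
            have t0 : |2 * y s - u₁ s| ≤ 2 * |y s| + |u₁ s| := by
              calc |2 * y s - u₁ s| = |2 * y s + -(u₁ s)| := by ring_nf
                _ ≤ |2 * y s| + |-(u₁ s)| := abs_add_le _ _
                _ = 2 * |y s| + |u₁ s| := by rw [abs_neg, abs_mul, abs_two]
            have e : |h₂ s| ≤ 2 * |y s| + |u₁ s| + |u₂ s| * |x s| := by
              calc |h₂ s| ≤ |2 * y s - u₁ s| + |u₂ s * x s| := abs_add_le _ _
                _ ≤ 2 * |y s| + |u₁ s| + |u₂ s| * |x s| := by rw [abs_mul]; linarith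
            nlinarith [abs_nonneg (y s), abs_nonneg (u₁ s), abs_nonneg (u₂ s),
              abs_nonneg (x s)]
        _ = (2 + 2*A) * T := by
            rw [setIntegral_const, smul_eq_mul, Real.volume_real_Ioo_of_le hTIcc.1]
            ring
        _ ≤ (2 + 2*A) * ε := by
            have := mul_le_mul_of_nonneg_left hTIcc.2 (show (0:ℝ) ≤ 2 + 2*A by linarith)
            linarith
    have hmax : max |x T| |y T| ≤ 1/2 := by
      exact max_le (hxT.trans hbnd1) (hyT.trans hbnd2)
    linarith
  -- endpoint values
  have hεIcc : ε ∈ Icc (0:ℝ) ε := ⟨hε.le, le_refl ε⟩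
  have hxε : x ε = -δ := by simp only [hxdef]; rw [hzε]; rfl
  have hyε : y ε = 0 := by simp only [hydef]; rw [hzε]; rfl
  have hIocsub : Ioc (0:ℝ) ε ⊆ Icc 0 ε := Ioc_subset_Icc_self
  -- integrability over Ioc 0 ε
  have hy2I : IntegrableOn (fun s => (y s)^2) (Ioc (0:ℝ) ε) volume := hy2int.mono_set hIocsub
  have hyaI : IntegrableOn (fun s => |y s|) (Ioc (0:ℝ) ε) volume := hyabsint.mono_set hIocsub
  have hu₁yI : IntegrableOn (fun s => u₁ s * y s) (Ioc (0:ℝ) ε) volume :=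
    hu₁yint.mono_set hIocsub
  have hu₂xyI : IntegrableOn (fun s => u₂ s * x s * y s) (Ioc (0:ℝ) ε) volume :=
    hu₂xyint.mono_set hIocsub
  have hh₂I : IntegrableOn h₂ (Ioc (0:ℝ) ε) volume := hh₂int.mono_set hIocsub
  -- the two basic integral identities
  have heq1 : -δ = (∫ s in Ioc (0:ℝ) ε, (y s)^2) + ∫ s in Ioc (0:ℝ) ε, u₁ s * y s := by
    have e0 := keyx ε hεIcc
    rw [intervalIntegral.integral_of_le hε.le, hxε] at e0
    simp only [hh₁def] at e0
    rw [integral_add hy2I hu₁yI] at e0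
    exact e0
  have hyIoc : ∀ s ∈ Icc (0:ℝ) ε, y s = ∫ r in Ioc (0:ℝ) s, h₂ r := by
    intro s hs
    rw [keyy s hs, intervalIntegral.integral_of_le hs.1]
  have hsq := sq_integral_eq ε hε.le h₂ hh₂I
  rw [← hyIoc ε hεIcc, hyε] at hsq
  have hinner : (∫ s in Ioc (0:ℝ) ε, (∫ r in Ioc (0:ℝ) s, h₂ r) * h₂ s)
      = ∫ s in Ioc (0:ℝ) ε, y s * h₂ s := by
    refine setIntegral_congr_fun measurableSet_Ioc (fun s hs => ?_)
    rw [← hyIoc s (hIocsub hs)]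
  rw [hinner] at hsq
  have hexp : (∫ s in Ioc (0:ℝ) ε, y s * h₂ s)
      = (2 * (∫ s in Ioc (0:ℝ) ε, (y s)^2) - ∫ s in Ioc (0:ℝ) ε, u₁ s * y s)
        + ∫ s in Ioc (0:ℝ) ε, u₂ s * x s * y s := by
    have e : (fun s => y s * h₂ s)
        = fun s => (2*(y s)^2 - u₁ s * y s) + u₂ s * x s * y s := by
      funext s; simp only [hh₂def]; ring
    have hsubI : IntegrableOn (fun s => 2*(y s)^2 - u₁ s * y s) (Ioc (0:ℝ) ε) volume := by
      have h' := (hy2I.const_mul 2).sub hu₁yI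
      exact h'
    have hmulI : IntegrableOn (fun s => 2*(y s)^2) (Ioc (0:ℝ) ε) volume := hy2I.const_mul 2
    rw [e, integral_add hsubI hu₂xyI, integral_sub hmulI hu₁yI, integral_const_mul]
  rw [hexp] at hsq
  -- basic facts about I and J
  have hI0 : 0 ≤ ∫ s in Ioc (0:ℝ) ε, (y s)^2 :=
    setIntegral_nonneg measurableSet_Ioc (fun s _ => sq_nonneg _)
  have hJ0 : 0 ≤ ∫ s in Ioc (0:ℝ) ε, |y s| :=
    setIntegral_nonneg measurableSet_Ioc (fun s _ => abs_nonneg _)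
  have hCS : (∫ s in Ioc (0:ℝ) ε, |y s|)^2 ≤ ε * ∫ s in Ioc (0:ℝ) ε, (y s)^2 := by
    rcases eq_or_lt_of_le hI0 with h0 | hpos
    · have hyae : (fun s => (y s)^2) =ᵐ[volume.restrict (Ioc (0:ℝ) ε)] 0 :=
        (integral_eq_zero_iff_of_nonneg_ae
          (Filter.Eventually.of_forall fun s => sq_nonneg (y s)) hy2I).mp h0.symm
      have hJeq : (∫ s in Ioc (0:ℝ) ε, |y s|) = 0 := by
        rw [integral_congr_ae (g := fun _ => (0:ℝ))
          (by filter_upwards [hyae] with s hs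
              have h2 : (y s)^2 = 0 := hs
              have h3 : y s = 0 := by nlinarith [sq_nonneg (y s)]
              simp [h3])]
        simp
      rw [hJeq, ← h0]
      norm_num
    · set c := Real.sqrt ((∫ s in Ioc (0:ℝ) ε, (y s)^2) / ε) with hcdef
      have hc : 0 < c := Real.sqrt_pos.mpr (div_pos hpos hε)
      have hc2 : c^2 = (∫ s in Ioc (0:ℝ) ε, (y s)^2) / ε :=
        Real.sq_sqrt (div_pos hpos hε).le
      have hcI : c^2 * ε = ∫ s in Ioc (0:ℝ) ε, (y s)^2 := by
        rw [hc2]; field_simp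
      have hkey : (∫ s in Ioc (0:ℝ) ε, |y s|)
          ≤ (∫ s in Ioc (0:ℝ) ε, (y s)^2) / (2*c) + c*ε/2 := by
        have step1 : (∫ s in Ioc (0:ℝ) ε, |y s|)
            ≤ ∫ s in Ioc (0:ℝ) ε, ((y s)^2/(2*c) + c/2) := by
          refine setIntegral_mono_on hyaI
            ((hy2I.div_const _).add (integrableOn_const measure_Ioc_lt_top.ne))
            measurableSet_Ioc (fun s _ => ?_)
          have hsq2 : 0 ≤ (y s)^2 + c^2 - 2*c*|y s| := by
            nlinarith [sq_nonneg (|y s| - c), sq_abs (y s)]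
          have hrew : (y s)^2/(2*c) + c/2 - |y s|
              = ((y s)^2 + c^2 - 2*c*|y s|)/(2*c) := by
            field_simp
          have hdiv : 0 ≤ ((y s)^2 + c^2 - 2*c*|y s|)/(2*c) :=
            div_nonneg hsq2 (by linarith)
          linarith [hrew ▸ hdiv]
        have step2 : (∫ s in Ioc (0:ℝ) ε, ((y s)^2/(2*c) + c/2))
            = (∫ s in Ioc (0:ℝ) ε, (y s)^2) / (2*c) + c*ε/2 := by
          rw [integral_add (hy2I.div_const _)
            (integrableOn_const measure_Ioc_lt_top.ne),
            integral_div, setIntegral_const, smul_eq_mul, Real.volume_real_Ioc_of_le hε.le]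
          ring
        linarith
      have hIdiv : (∫ s in Ioc (0:ℝ) ε, (y s)^2) / (2*c) = c*ε/2 := by
        rw [← hcI]; field_simp
      have hJcε : (∫ s in Ioc (0:ℝ) ε, |y s|) ≤ c * ε := by
        rw [hIdiv] at hkey; linarith
      have hpow := pow_le_pow_left₀ hJ0 hJcε 2
      have e2 : (c*ε)^2 = (c^2*ε)*ε := by ring
      rw [e2, hcI] at hpow
      linarith [hpow]
  -- pointwise bound |x t| ≤ (1+A) * J
  have hXbd : ∀ t ∈ Icc (0:ℝ) ε, |x t| ≤ (1 + A) * ∫ s in Ioc (0:ℝ) ε, |y s| := by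
    intro t ht
    rw [keyx t ht, intervalIntegral.integral_of_le ht.1, integral_Ioc_eq_integral_Ioo]
    have hsub' : Ioo (0:ℝ) t ⊆ Icc 0 ε := fun s hs => ⟨hs.1.le, hs.2.le.trans ht.2⟩
    have hsub'' : Ioo (0:ℝ) t ⊆ Ioc 0 ε := fun s hs => ⟨hs.1, hs.2.le.trans ht.2⟩
    have hint : IntegrableOn h₁ (Ioo (0:ℝ) t) volume := hh₁int.mono_set hsub'
    calc |∫ s in Ioo (0:ℝ) t, h₁ s| ≤ ∫ s in Ioo (0:ℝ) t, |h₁ s| := by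
          simpa [Real.norm_eq_abs] using
            norm_integral_le_integral_norm (μ := volume.restrict (Ioo (0:ℝ) t)) h₁
      _ ≤ ∫ s in Ioo (0:ℝ) t, (1 + A) * |y s| := by
          have hcm : IntegrableOn (fun s => (1 + A) * |y s|) (Ioo (0:ℝ) t) volume :=
            (hyabsint.mono_set hsub').const_mul _
          refine integral_mono_ae hint.abs hcm ?_
          filter_upwards [ae_restrict_of_ae_restrict_of_subset hsub' hu₁A,
            ae_restrict_mem measurableSet_Ioo] with s hu hs
          have hy1 := (hone s (hsub' hs)).2
          have e : |h₁ s| ≤ |y s|^2 + |u₁ s| * |y s| := by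
            calc |h₁ s| ≤ |(y s)^2| + |u₁ s * y s| := abs_add_le _ _
              _ = |y s|^2 + |u₁ s| * |y s| := by
                  rw [abs_mul, abs_of_nonneg (sq_nonneg (y s)), ← sq_abs]
          nlinarith [abs_nonneg (y s), abs_nonneg (u₁ s)]
      _ ≤ ∫ s in Ioc (0:ℝ) ε, (1 + A) * |y s| := by
          have hcm' : IntegrableOn (fun s => (1 + A) * |y s|) (Ioc (0:ℝ) ε) volume :=
            hyaI.const_mul _
          refine setIntegral_mono_set hcm' ?_ ?_
          · exact Filter.Eventually.of_forall fun s =>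
              mul_nonneg (by linarith) (abs_nonneg _)
          · exact HasSubset.Subset.eventuallyLE hsub''
      _ = (1 + A) * ∫ s in Ioc (0:ℝ) ε, |y s| := integral_const_mul _ _
  -- bound on the coupling term
  have hEbd : |∫ s in Ioc (0:ℝ) ε, u₂ s * x s * y s|
      ≤ (A * (1 + A)) * (∫ s in Ioc (0:ℝ) ε, |y s|)^2 := by
    calc |∫ s in Ioc (0:ℝ) ε, u₂ s * x s * y s|
        ≤ ∫ s in Ioc (0:ℝ) ε, |u₂ s * x s * y s| := by
          simpa only [Real.norm_eq_abs] using
            norm_integral_le_integral_norm (μ := volume.restrict (Ioc (0:ℝ) ε))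
              (fun s => u₂ s * x s * y s)
      _ ≤ ∫ s in Ioc (0:ℝ) ε,
            (A * ((1 + A) * ∫ r in Ioc (0:ℝ) ε, |y r|)) * |y s| := by
          have hcm2 : IntegrableOn
              (fun s => (A * ((1 + A) * ∫ r in Ioc (0:ℝ) ε, |y r|)) * |y s|)
              (Ioc (0:ℝ) ε) volume := hyaI.const_mul _
          refine integral_mono_ae hu₂xyI.abs hcm2 ?_
          filter_upwards [ae_restrict_of_ae_restrict_of_subset hIocsub hu₂A,
            ae_restrict_mem measurableSet_Ioc] with s hu hs
          have hx := hXbd s (hIocsub hs)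
          rw [abs_mul, abs_mul]
          have m1 : |u₂ s| * |x s| ≤ A * ((1 + A) * ∫ r in Ioc (0:ℝ) ε, |y r|) :=
            mul_le_mul hu hx (abs_nonneg _) hA0
          exact mul_le_mul_of_nonneg_right m1 (abs_nonneg _)
      _ = (A * (1 + A)) * (∫ s in Ioc (0:ℝ) ε, |y s|)^2 := by
          rw [integral_const_mul]
          ring
  -- final contradiction
  have hquad : (A * (1 + A)) * (∫ s in Ioc (0:ℝ) ε, |y s|)^2
      ≤ (1/4) * ∫ s in Ioc (0:ℝ) ε, (y s)^2 := by
    have h0 : (0:ℝ) ≤ A * (1 + A) := mul_nonneg hA0 (by linarith)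
    calc (A * (1 + A)) * (∫ s in Ioc (0:ℝ) ε, |y s|)^2
        ≤ (A * (1 + A)) * (ε * ∫ s in Ioc (0:ℝ) ε, (y s)^2) :=
          mul_le_mul_of_nonneg_left hCS h0
      _ = (A * (1 + A) * ε) * ∫ s in Ioc (0:ℝ) ε, (y s)^2 := by ring
      _ ≤ (1/4) * ∫ s in Ioc (0:ℝ) ε, (y s)^2 :=
          mul_le_mul_of_nonneg_right hA14 hI0
  have hElow : -((1/4) * ∫ s in Ioc (0:ℝ) ε, (y s)^2)
      ≤ ∫ s in Ioc (0:ℝ) ε, u₂ s * x s * y s := by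
    have h1 : |∫ s in Ioc (0:ℝ) ε, u₂ s * x s * y s|
        ≤ (1/4) * ∫ s in Ioc (0:ℝ) ε, (y s)^2 := hEbd.trans hquad
    exact le_trans (neg_le_neg h1) (neg_abs_le _)
  have hsq' : (0:ℝ) = 2 * ((2 * (∫ s in Ioc (0:ℝ) ε, (y s)^2)
      - ∫ s in Ioc (0:ℝ) ε, u₁ s * y s) + ∫ s in Ioc (0:ℝ) ε, u₂ s * x s * y s) := by
    rw [← hsq]; norm_num
  linarith [heq1, hsq', hElow, hI0, hδ]
end
end

section
/- Let α ≠ 0 be a real number. The planar control system ẋ = y² + y u₁ − (2/α) y² u₂, ẏ = 2y − u₁ − (1/α) y u₂ is not STLC at the equilibrium (0, (0, u₂^eq)) for any u₂^eq ∈ ℝ with u₂^eq ≠ α, where 0 = (0,0) ∈ ℝ². -/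
open MeasureTheory Set

noncomputable section

/-- STLC at the equilibrium `(0,(0,u2eq))` for the two-input system
`ż = g₀(z) + u₁ g₁(z) + u₂ g₂(z)`. -/
def STLC2 {n : ℕ} (g₀ g₁ g₂ : Vec n → Vec n) (u2eq : ℝ) : Prop :=
  ∀ ε > (0:ℝ), ∃ η > (0:ℝ), ∀ z₀ ∈ Metric.ball (0 : Vec n) η, ∀ z₁ ∈ Metric.ball (0 : Vec n) η,
    ∃ (u₁ u₂ : ℝ → ℝ) (z : ℝ → Vec n),
      MeasBdd ε ε u₁ ∧ MeasBdd ε ε (fun t => u₂ t - u2eq) ∧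
      IsSol2 g₀ g₁ g₂ u₁ u₂ ε z ∧ z 0 = z₀ ∧ z ε = z₁

lemma sq_half (k : ℝ → ℝ) (hk : Integrable k (volume : Measure ℝ)) :
    ∫ t : ℝ, (∫ s in Iic t, k s) * k t = (∫ t : ℝ, k t) ^ 2 / 2 := by
  set Q : ℝ → ℝ → ℝ :=
    fun t s => ({p : ℝ × ℝ | p.2 ≤ p.1}.indicator (fun p => k p.1 * k p.2)) (t, s) with hQdef
  have hmeasset : MeasurableSet {p : ℝ × ℝ | p.2 ≤ p.1} :=
    measurableSet_le measurable_snd measurable_fst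
  have hkk : Integrable (fun p : ℝ × ℝ => k p.1 * k p.2) ((volume : Measure ℝ).prod volume) :=
    hk.mul_prod hk
  have hQint : Integrable (Function.uncurry Q) ((volume : Measure ℝ).prod volume) := by
    have h : Function.uncurry Q = {p : ℝ × ℝ | p.2 ≤ p.1}.indicator (fun p => k p.1 * k p.2) := by
      funext p; cases p; rfl
    rw [h]
    exact hkk.indicator hmeasset
  have hA : ∀ t : ℝ, (∫ s, Q t s) = (∫ s in Iic t, k s) * k t := by
    intro t
    have h1 : (fun s => Q t s) = (Iic t).indicator (fun s => k t * k s) := by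
      funext s
      by_cases h : s ≤ t <;> simp [hQdef, Set.indicator, h]
    rw [h1, integral_indicator measurableSet_Iic, integral_const_mul]
    ring
  have hB : ∀ s : ℝ, (∫ t, Q t s) = (∫ t in Ici s, k t) * k s := by
    intro s
    have h1 : (fun t => Q t s) = (Ici s).indicator (fun t => k t * k s) := by
      funext t
      by_cases h : s ≤ t <;> simp [hQdef, Set.indicator, h]
    rw [h1, integral_indicator measurableSet_Ici, integral_mul_const]
  have hswap := MeasureTheory.integral_integral_swap hQint
  have hfa : Integrable (fun t => ∫ s, Q t s) (volume : Measure ℝ) := hQint.integral_prod_left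
  have hfb : Integrable (fun s => ∫ t, Q t s) (volume : Measure ℝ) := hQint.integral_prod_right
  have hsum : ∀ t : ℝ, (∫ s in Iic t, k s) + (∫ s in Ici t, k s) = ∫ s, k s := by
    intro t
    rw [integral_Ici_eq_integral_Ioi]
    exact intervalIntegral.integral_Iic_add_Ioi hk.integrableOn hk.integrableOn
  simp only [hA] at hswap hfa
  simp only [hB] at hswap hfb
  have hAB : (∫ t : ℝ, (∫ s in Iic t, k s) * k t) + (∫ t : ℝ, (∫ s in Ici t, k s) * k t)
      = (∫ t : ℝ, k t) ^ 2 := by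
    rw [← integral_add hfa hfb]
    have e : (fun t : ℝ => (∫ s in Iic t, k s) * k t + (∫ s in Ici t, k s) * k t)
        = fun t : ℝ => (∫ s : ℝ, k s) * k t := by
      funext t
      rw [← add_mul, hsum t]
    rw [e, integral_const_mul, sq]
  linarith [hswap, hAB]

/-- The planar system `ẋ = y² + y u₁ − (2/α) y² u₂`, `ẏ = 2y − u₁ − (1/α) y u₂`
(`α ≠ 0`) is not STLC at `((0,0),(0,u₂^eq))` for any `u₂^eq ≠ α`. -/
theorem stmt11 (α : ℝ) (hα : α ≠ 0) :
    ∀ u2eq : ℝ, u2eq ≠ α →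
      ¬ STLC2 (fun z : Vec 2 => !₂[(z 1) ^ 2, 2 * z 1])
        (fun z : Vec 2 => !₂[z 1, -1])
        (fun z : Vec 2 => !₂[-(2 / α) * (z 1) ^ 2, -(1 / α) * z 1]) u2eq := by
  intro u2eq hne hstlc
  have hαu : α - u2eq ≠ 0 := sub_ne_zero.2 (Ne.symm hne)
  set ε : ℝ := |α - u2eq| / 2 with hεdef
  have hε : 0 < ε := by
    have : 0 < |α - u2eq| := abs_pos.2 hαu
    simp only [hεdef]; linarith
  obtain ⟨η, hη, H⟩ := hstlc ε hε
  set d : ℝ := (α - u2eq) / α with hd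
  set s : ℝ := if 0 ≤ d then (1:ℝ) else -1 with hs
  have hs2 : s * s = 1 := by by_cases h : 0 ≤ d <;> simp [hs, h]
  have hsabs : |s| = 1 := by by_cases h : 0 ≤ d <;> simp [hs, h]
  have hsd : s * d = |d| := by
    by_cases h : 0 ≤ d
    · simp [hs, h, abs_of_nonneg h]
    · simp [hs, h, abs_of_neg (lt_of_not_ge h)]
  set z₁ : Vec 2 := !₂[-s * η / 2, 0] with hz₁
  have hz₁0 : z₁ 0 = -s * η / 2 := rfl
  have hz₁1 : z₁ 1 = 0 := rfl
  have hz₁norm : ‖z₁‖ = η / 2 := by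
    have h0 : ‖z₁‖ = Real.sqrt (‖z₁ 0‖ ^ 2 + ‖z₁ 1‖ ^ 2) := by
      rw [EuclideanSpace.norm_eq, Fin.sum_univ_two]
    have h1 : ‖z₁ 0‖ = η / 2 := by
      rw [hz₁0, Real.norm_eq_abs, abs_div, abs_mul, abs_neg, hsabs, one_mul,
        abs_of_pos hη]
      norm_num
    rw [h0, h1, hz₁1, norm_zero]
    rw [show (0:ℝ) ^ 2 = 0 by ring, add_zero]
    exact Real.sqrt_sq (by linarith)
  have hz₁mem : z₁ ∈ Metric.ball (0 : Vec 2) η := by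
    rw [mem_ball_zero_iff, hz₁norm]; linarith
  obtain ⟨u₁, u₂, z, hm1, hm2, hsol, hz0, hzε⟩ := H 0 (Metric.mem_ball_self hη) z₁ hz₁mem
  have hzc : ContinuousOn z (Icc 0 ε) := hsol.1
  set F : ℝ → Vec 2 := fun σ =>
    ((fun w : Vec 2 => !₂[(w 1) ^ 2, 2 * w 1]) (z σ)
      + u₁ σ • (fun w : Vec 2 => !₂[w 1, -1]) (z σ)
      + u₂ σ • (fun w : Vec 2 => !₂[-(2 / α) * (w 1) ^ 2, -(1 / α) * w 1]) (z σ)) with hF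
  have hzi : ∀ t ∈ Icc (0:ℝ) ε, z t = z 0 + ∫ σ in (0:ℝ)..t, F σ := hsol.2
  have hproj : ∀ (i : Fin 2) (v : Vec 2), (EuclideanSpace.proj i : Vec 2 →L[ℝ] ℝ) v = v i :=
    fun _ _ => rfl
  have hm0 : ∀ a b : ℝ,
      (EuclideanSpace.proj (0 : Fin 2) : Vec 2 →L[ℝ] ℝ) (!₂[a, b] : Vec 2) = a := fun _ _ => rfl
  have hm1' : ∀ a b : ℝ,
      (EuclideanSpace.proj (1 : Fin 2) : Vec 2 →L[ℝ] ℝ) (!₂[a, b] : Vec 2) = b := fun _ _ => rfl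
  by_cases hInt : IntervalIntegrable F volume 0 ε
  · -- main case
    set g : ℝ → ℝ := fun t => (EuclideanSpace.proj (1 : Fin 2) : Vec 2 →L[ℝ] ℝ) (F t) with hgdef
    set h : ℝ → ℝ := fun t => (EuclideanSpace.proj (0 : Fin 2) : Vec 2 →L[ℝ] ℝ) (F t) with hhdef
    have hgval : ∀ t, g t = 2 * z t 1 - u₁ t - 1 / α * z t 1 * u₂ t := by
      intro t
      simp only [hgdef, hF, map_add, _root_.map_smul, hm1', smul_eq_mul]
      ring
    have hhval : ∀ t, h t = (z t 1) ^ 2 + u₁ t * z t 1 - u₂ t * (2 / α * (z t 1) ^ 2) := by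
      intro t
      simp only [hhdef, hF, map_add, _root_.map_smul, hm0, smul_eq_mul]
      ring
    have hg_int : IntervalIntegrable g volume 0 ε :=
      ⟨ContinuousLinearMap.integrable_comp _ hInt.1, ContinuousLinearMap.integrable_comp _ hInt.2⟩
    have hh_int : IntervalIntegrable h volume 0 ε :=
      ⟨ContinuousLinearMap.integrable_comp _ hInt.1, ContinuousLinearMap.integrable_comp _ hInt.2⟩
    have hz00 : ∀ i : Fin 2, z 0 i = 0 := by
      intro i; rw [hz0]; rfl
    have hYeq : ∀ t ∈ Icc (0:ℝ) ε, z t 1 = ∫ σ in (0:ℝ)..t, g σ := by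
      intro t ht
      have h2 := congrArg (EuclideanSpace.proj (1 : Fin 2) : Vec 2 →L[ℝ] ℝ) (hzi t ht)
      rw [map_add] at h2
      have hsub : IntervalIntegrable F volume 0 t :=
        hInt.mono_set (by rw [uIcc_of_le ht.1, uIcc_of_le hε.le]; exact Icc_subset_Icc le_rfl ht.2)
      rw [← ContinuousLinearMap.intervalIntegral_comp_comm _ hsub] at h2
      rw [hproj, hproj, hz00] at h2
      rw [h2, zero_add]
    have hXeq : z ε 0 = ∫ σ in (0:ℝ)..ε, h σ := by
      have h2 := congrArg (EuclideanSpace.proj (0 : Fin 2) : Vec 2 →L[ℝ] ℝ)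
        (hzi ε ⟨hε.le, le_rfl⟩)
      rw [map_add] at h2
      rw [← ContinuousLinearMap.intervalIntegral_comp_comm _ hInt] at h2
      rw [hproj, hproj, hz00] at h2
      rw [h2, zero_add]
    -- indicator extension of g
    set k : ℝ → ℝ := (Ioc (0:ℝ) ε).indicator g with hkdef
    have hk_int : Integrable k (volume : Measure ℝ) :=
      (integrable_indicator_iff measurableSet_Ioc).2 hg_int.1
    have hKeq : ∀ t ∈ Icc (0:ℝ) ε, (∫ σ in Iic t, k σ) = ∫ σ in (0:ℝ)..t, g σ := by
      intro t ht
      rw [← integral_indicator measurableSet_Iic]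
      have hset : Iic t ∩ Ioc 0 ε = Ioc (0:ℝ) t := by
        ext x
        simp only [mem_inter_iff, mem_Iic, mem_Ioc]
        constructor
        · rintro ⟨h1, h2, h3⟩; exact ⟨h2, h1⟩
        · rintro ⟨h1, h2⟩; exact ⟨h2, h1, le_trans h2 ht.2⟩
      have h1 : (Iic t).indicator k = (Ioc (0:ℝ) t).indicator g := by
        rw [hkdef, Set.indicator_indicator, hset]
      rw [h1, integral_indicator measurableSet_Ioc, intervalIntegral.integral_of_le ht.1]
    have hI0 : (∫ t : ℝ, k t) = 0 := by
      have h1 : (∫ t : ℝ, k t) = ∫ σ in Iic ε, k σ := by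
        rw [← intervalIntegral.integral_Iic_add_Ioi hk_int.integrableOn hk_int.integrableOn]
        have h2 : ∫ σ in Ioi ε, k σ = 0 := by
          have he : EqOn k (fun _ => (0:ℝ)) (Ioi ε) := by
            intro x hx
            exact indicator_of_notMem (fun hc => absurd hc.2 (not_le.2 hx)) g
          rw [setIntegral_congr_fun measurableSet_Ioi he, integral_zero]
        rw [h2, add_zero]
      rw [h1, hKeq ε ⟨hε.le, le_rfl⟩, ← hYeq ε ⟨hε.le, le_rfl⟩, hzε, hz₁1]
    have hsq := sq_half k hk_int
    rw [hI0] at hsq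
    -- ∫ Y g = 0
    have hYg0 : ∫ t in (0:ℝ)..ε, z t 1 * g t = 0 := by
      rw [intervalIntegral.integral_of_le hε.le]
      have h1 : EqOn (fun t => z t 1 * g t) (fun t => (∫ σ in Iic t, k σ) * k t) (Ioc 0 ε) := by
        intro t htm
        have htm' : t ∈ Icc (0:ℝ) ε := Ioc_subset_Icc_self htm
        simp only
        rw [hYeq t htm', ← hKeq t htm', hkdef, indicator_of_mem htm g]
      rw [setIntegral_congr_fun measurableSet_Ioc h1]
      have h2 : (fun t => (∫ σ in Iic t, k σ) * k t)
          = (Ioc (0:ℝ) ε).indicator (fun t => (∫ σ in Iic t, k σ) * k t) := by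
        funext t
        by_cases htm : t ∈ Ioc (0:ℝ) ε
        · rw [indicator_of_mem htm]
        · rw [indicator_of_notMem htm]
          have hk0 : k t = 0 := indicator_of_notMem htm g
          rw [hk0, mul_zero]
      rw [← integral_indicator measurableSet_Ioc, ← h2, hsq]
      norm_num
    -- integrability of Y * g
    have hYcont : ContinuousOn (fun t => z t 1) (Icc (0:ℝ) ε) := by
      have := (EuclideanSpace.proj (1 : Fin 2) : Vec 2 →L[ℝ] ℝ).continuous.comp_continuousOn hzc
      simpa only [Function.comp_def, hproj] using this
    obtain ⟨M, hM⟩ := isCompact_Icc.exists_bound_of_continuousOn hYcont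
    have hYg_int : IntervalIntegrable (fun t => z t 1 * g t) volume 0 ε := by
      refine (intervalIntegrable_iff_integrableOn_Ioc_of_le hε.le).2 ?_
      refine Integrable.bdd_mul (c := M) hg_int.1 ?_ ?_
      · exact ((hYcont.aestronglyMeasurable measurableSet_Icc).mono_measure
          (Measure.restrict_mono Ioc_subset_Icc_self le_rfl))
      · filter_upwards [ae_restrict_mem measurableSet_Ioc] with t ht
        exact hM t (Ioc_subset_Icc_self ht)
    -- the main identity
    have hT : (∫ t in (0:ℝ)..ε, 3 * (z t 1) ^ 2 * ((α - u₂ t) / α)) = z ε 0 := by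
      have he : (fun t => 3 * (z t 1) ^ 2 * ((α - u₂ t) / α))
          = fun t => h t + z t 1 * g t := by
        funext t
        rw [hgval t, hhval t]
        field_simp
        ring
      rw [he, intervalIntegral.integral_add hh_int hYg_int, hYg0, add_zero, hXeq]
    -- sign
    have hpos : 0 ≤ ∫ t in (0:ℝ)..ε, s * (3 * (z t 1) ^ 2 * ((α - u₂ t) / α)) := by
      apply intervalIntegral.integral_nonneg_of_ae_restrict hε.le
      filter_upwards [hm2.2] with t htb
      simp only [Pi.zero_apply]
      have habs : 0 < |α| := abs_pos.2 hα
      have h1 : 0 ≤ s * ((α - u₂ t) / α) := by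
        have e1 : s * ((α - u₂ t) / α) = s * d - s * ((u₂ t - u2eq) / α) := by
          rw [hd]; field_simp; ring
        have e2 : s * ((u₂ t - u2eq) / α) ≤ ε / |α| := by
          calc s * ((u₂ t - u2eq) / α) ≤ |s * ((u₂ t - u2eq) / α)| := le_abs_self _
            _ = |u₂ t - u2eq| / |α| := by rw [abs_mul, hsabs, one_mul, abs_div]
            _ ≤ ε / |α| := by gcongr
        have e3 : s * d = 2 * (ε / |α|) := by
          rw [hsd, hd, abs_div, hεdef]; ring
        have e4 : 0 ≤ ε / |α| := by positivity
        rw [e1, e3]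
        linarith
      have h2 : 0 ≤ 3 * (z t 1) ^ 2 * (s * ((α - u₂ t) / α)) := by
        apply mul_nonneg _ h1
        positivity
      have h3 : s * (3 * (z t 1) ^ 2 * ((α - u₂ t) / α))
          = 3 * (z t 1) ^ 2 * (s * ((α - u₂ t) / α)) := by ring
      rw [h3]
      exact h2
    rw [intervalIntegral.integral_const_mul, hT, hzε, hz₁0] at hpos
    have hc : s * (-s * η / 2) = -(s * s) * η / 2 := by ring
    rw [hc, hs2] at hpos
    linarith
  · -- degenerate case : the integral is undefined, so z ε = z 0
    have h0 := hzi ε ⟨hε.le, le_rfl⟩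
    rw [intervalIntegral.integral_undef hInt] at h0
    rw [hz0, add_zero] at h0
    rw [hzε] at h0
    have hn : ‖z₁‖ = 0 := by rw [h0, norm_zero]
    rw [hz₁norm] at hn
    linarith
end
end

section
/- Let α ≠ 0 be a real number. The planar control system ẋ = y² + y u₁ − (2/α) y² u₂, ẏ = 2y − u₁ − (1/α) y u₂ is STLC at the equilibrium (0, (0, α)), where 0 = (0,0) ∈ ℝ². -/
open MeasureTheory Set

noncomputable section

/-- Auxiliary: inclusion of `Fin 2 → ℝ` into `Vec 2` as a continuous linear map. -/
noncomputable def Φ : (Fin 2 → ℝ) →L[ℝ] Vec 2 :=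
  ((EuclideanSpace.equiv (Fin 2) ℝ).symm : (Fin 2 → ℝ) ≃L[ℝ] Vec 2)

@[simp] lemma Φ_apply (v : Fin 2 → ℝ) (i : Fin 2) : Φ v i = v i := rfl

lemma coord_le_norm (z : Vec 2) (i : Fin 2) : |z i| ≤ ‖z‖ := by
  rw [EuclideanSpace.norm_eq, ← Real.sqrt_sq_eq_abs]
  apply Real.sqrt_le_sqrt
  rw [show (z i)^2 = ‖z i‖^2 by rw [Real.norm_eq_abs, sq_abs]]
  exact Finset.single_le_sum (f := fun j => ‖z j‖^2) (fun j _ => by positivity) (Finset.mem_univ i)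

lemma quartic (ε : ℝ) : ∫ t in (0:ℝ)..ε, (ε*t - t^2)^2 = ε^5/30 := by
  have h : ∀ t : ℝ, (ε*t - t^2)^2 = ε^2*t^2 - 2*ε*t^3 + t^4 := fun t => by ring
  simp_rw [h]
  rw [intervalIntegral.integral_add (by apply Continuous.intervalIntegrable; fun_prop)
      (by apply Continuous.intervalIntegrable; fun_prop),
    intervalIntegral.integral_sub (by apply Continuous.intervalIntegrable; fun_prop)
      (by apply Continuous.intervalIntegrable; fun_prop),
    intervalIntegral.integral_const_mul, intervalIntegral.integral_const_mul,
    integral_pow, integral_pow, integral_pow]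
  ring

lemma lin_deriv (y₀ b d ε t : ℝ) :
    HasDerivAt (fun t => y₀ + b*t + d*(ε*t - t^2)) (b + d*(ε - 2*t)) t := by
  have h1 := (((hasDerivAt_id t).const_mul b).const_add y₀).add
      (((((hasDerivAt_id t).const_mul ε)).sub (hasDerivAt_pow 2 t)).const_mul d)
  exact h1.congr_deriv (by push_cast; ring)

lemma integrand_eq (α δ xv yv dyv : ℝ) (hα : α ≠ 0) :
    (fun z : Vec 2 => (!₂[(z 1) ^ 2, 2 * z 1] : Vec 2)) (Φ ![xv, yv])
      + ((1+δ)*yv - dyv) • (fun z : Vec 2 => (!₂[z 1, -1] : Vec 2)) (Φ ![xv, yv])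
      + (α*(1-δ)) • (fun z : Vec 2 => (!₂[-(2 / α) * (z 1) ^ 2, -(1 / α) * z 1] : Vec 2)) (Φ ![xv, yv])
    = Φ ![3*δ*yv^2 - yv*dyv, dyv] := by
  ext i
  fin_cases i <;> simp [Φ] <;> field_simp <;> ring

set_option maxHeartbeats 4000000 in
/-- The planar system `ẋ = y² + y u₁ − (2/α) y² u₂`, `ẏ = 2y − u₁ − (1/α) y u₂`
(`α ≠ 0`) is STLC at the equilibrium `((0,0),(0,α))`. -/
theorem stmt12 (α : ℝ) (hα : α ≠ 0) :
    STLC2 (fun z : Vec 2 => !₂[(z 1) ^ 2, 2 * z 1])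
      (fun z : Vec 2 => !₂[z 1, -1])
      (fun z : Vec 2 => !₂[-(2 / α) * (z 1) ^ 2, -(1 / α) * z 1]) α := by
  intro ε hε
  have hεne : ε ≠ 0 := ne_of_gt hε
  set A : ℝ := 1 + |α| with hA
  clear_value A
  have hA1 : 1 ≤ A := by rw [hA]; linarith only [abs_nonneg α]
  have hαA : |α| ≤ A := by rw [hA]; linarith only []
  have hA0 : 0 < A := lt_of_lt_of_le one_pos hA1
  set e : ℝ := min ε 1 with he
  clear_value e
  have he0 : 0 < e := by rw [he]; exact lt_min hε one_pos
  have he1 : e ≤ 1 := by rw [he]; exact min_le_right _ _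
  have heε : e ≤ ε := by rw [he]; exact min_le_left _ _
  set c : ℝ := e^3/100 with hc
  clear_value c
  have hc0 : 0 < c := by rw [hc]; positivity
  have he2 : e^2 ≤ 1 := by
    linarith only [mul_nonneg (sub_nonneg.2 he1) (by linarith only [he0] : (0:ℝ) ≤ 1 + e)]
  have hc1 : c ≤ 1/100 := by
    rw [hc]
    linarith only [he2, mul_nonneg (sub_nonneg.2 he1) (sq_nonneg e)]
  set η : ℝ := c^2*e^2/(100*A) with hη
  clear_value η
  have hη0 : 0 < η := by rw [hη]; positivity
  have hηA : η * (100*A) = c^2*e^2 := by rw [hη]; field_simp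
  have hηc : 8*η ≤ c := by
    have h1 : c^2*e^2 ≤ c^2 := by
      linarith only [mul_nonneg (sub_nonneg.2 he2) (sq_nonneg c)]
    have h2 : c^2 ≤ c/100 := by
      linarith only [mul_nonneg (sub_nonneg.2 hc1) hc0.le]
    have h8 : (8*η)*(100*A) ≤ c*(100*A) := by
      rw [show (8*η)*(100*A) = 8*(η*(100*A)) by ring, hηA]
      linarith only [h1, h2, hc0.le, mul_nonneg hc0.le (by linarith only [hA1] : (0:ℝ) ≤ 100*A - 1)]
    exact le_of_mul_le_mul_right h8 (by positivity)
  have hη1 : η ≤ 1 := by linarith only [hηc, hc1, hη0.le]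
  refine ⟨η, hη0, ?_⟩
  intro z₀ hz₀ z₁ hz₁
  rw [mem_ball_zero_iff] at hz₀ hz₁
  set x₀ := z₀ 0 with hx₀d
  set y₀ := z₀ 1 with hy₀d
  set x₁ := z₁ 0 with hx₁d
  set y₁ := z₁ 1 with hy₁d
  have hx₀ : |x₀| ≤ η := le_of_lt (lt_of_le_of_lt (coord_le_norm z₀ 0) hz₀)
  have hy₀ : |y₀| ≤ η := le_of_lt (lt_of_le_of_lt (coord_le_norm z₀ 1) hz₀)
  have hx₁ : |x₁| ≤ η := le_of_lt (lt_of_le_of_lt (coord_le_norm z₁ 0) hz₁)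
  have hy₁ : |y₁| ≤ η := le_of_lt (lt_of_le_of_lt (coord_le_norm z₁ 1) hz₁)
  clear_value x₀ y₀ x₁ y₁
  set b : ℝ := (y₁ - y₀)/ε with hb
  clear_value b
  set d : ℝ := 4*c/ε^2 with hd
  clear_value d
  have hd0 : 0 < d := by rw [hd]; positivity
  set Y : ℝ → ℝ := fun t => y₀ + b*t + d*(ε*t - t^2) with hYd
  set DY : ℝ → ℝ := fun t => b + d*(ε - 2*t) with hDYd
  clear_value Y
  have hYc : Continuous Y := by rw [hYd]; fun_prop
  clear_value DY
  have hDYc : Continuous DY := by rw [hDYd]; fun_prop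
  have hYderiv : ∀ t, HasDerivAt Y (DY t) t := fun t => by
    rw [hYd, hDYd]; exact lin_deriv y₀ b d ε t
  -- pointwise bounds on Y and DY
  have hP : ∀ t ∈ Icc (0:ℝ) ε, |y₀ + b*t| ≤ η := by
    intro t ht
    obtain ⟨ht0, htε⟩ := ht
    have hbt : b*t = (y₁ - y₀)*(t/ε) := by rw [hb]; ring
    have hr0 : 0 ≤ t/ε := by positivity
    have hr1 : t/ε ≤ 1 := by rw [div_le_one hε]; exact htε
    rw [hbt, abs_le]
    obtain ⟨h1, h2⟩ := abs_le.mp hy₀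
    obtain ⟨h3, h4⟩ := abs_le.mp hy₁
    set r := t/ε with hr
    clear_value r
    constructor <;>
      linarith only [mul_nonneg (by linarith only [h1] : (0:ℝ) ≤ y₀ + η) (by linarith only [hr1] : (0:ℝ) ≤ 1 - r),
        mul_nonneg (by linarith only [h3] : (0:ℝ) ≤ y₁ + η) hr0,
        mul_nonneg (by linarith only [h2] : (0:ℝ) ≤ η - y₀) (by linarith only [hr1] : (0:ℝ) ≤ 1 - r),
        mul_nonneg (by linarith only [h4] : (0:ℝ) ≤ η - y₁) hr0]
  have hQ : ∀ t ∈ Icc (0:ℝ) ε, 0 ≤ d*(ε*t - t^2) ∧ d*(ε*t - t^2) ≤ c := by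
    intro t ht
    obtain ⟨ht0, htε⟩ := ht
    constructor
    · exact mul_nonneg hd0.le (by linarith only [mul_nonneg ht0 (sub_nonneg.2 htε)])
    · rw [hd]
      rw [div_mul_eq_mul_div, div_le_iff₀ (by positivity)]
      linarith only [mul_nonneg hc0.le (sq_nonneg (ε - 2*t))]
  have hYb : ∀ t ∈ Icc (0:ℝ) ε, |Y t| ≤ η + c := by
    intro t ht
    have h1 := hP t ht
    have h2 := hQ t ht
    simp only [hYd]
    rw [abs_le] at h1 ⊢
    constructor <;> linarith only [h1.1, h1.2, h2.1, h2.2]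
  have hDYb : ∀ t ∈ Icc (0:ℝ) ε, |DY t| ≤ 2*η/ε + 4*c/ε := by
    intro t ht
    obtain ⟨ht0, htε⟩ := ht
    simp only [hDYd]
    refine le_trans (abs_add_le _ _) (add_le_add ?_ ?_)
    · rw [hb, abs_div, abs_of_pos hε]
      gcongr
      calc |y₁ - y₀| ≤ |y₁| + |y₀| := abs_sub _ _
        _ ≤ 2*η := by linarith only [hy₀, hy₁]
    · rw [abs_mul, abs_of_pos hd0, hd]
      have h2 : |ε - 2*t| ≤ ε := by rw [abs_le]; constructor <;> linarith only [ht0, htε]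
      calc 4*c/ε^2 * |ε - 2*t| ≤ 4*c/ε^2 * ε := by gcongr
        _ = 4*c/ε := by field_simp
    -- the integral I and its lower bound
  set I : ℝ := ∫ t in (0:ℝ)..ε, (Y t)^2 with hI
  clear_value I
  have he3e2 : e^3 ≤ e^2 := by
    linarith only [mul_nonneg (sq_nonneg e) (sub_nonneg.2 he1)]
  have he2ε : e^2 ≤ ε := by
    linarith only [heε, mul_nonneg he0.le (sub_nonneg.2 he1)]
  have he3ε : e^3 ≤ ε := by linarith only [he3e2, he2ε]
  have he22 : e^2 ≤ ε^2 := by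
    linarith only [he2ε, mul_nonneg (sub_nonneg.2 heε) (by linarith only [he0, hε] : (0:ℝ) ≤ ε + e), mul_nonneg he0.le (sub_nonneg.2 he1)]
  have hIlow : c^2*ε/4 ≤ I := by
    have hmono : ∫ t in (0:ℝ)..ε, ((d^2/2)*(ε*t - t^2)^2 - η^2) ≤ I := by
      rw [hI]
      apply intervalIntegral.integral_mono_on (le_of_lt hε)
      · apply Continuous.intervalIntegrable
        fun_prop
      · exact ((hYc.pow 2)).intervalIntegrable _ _
      · intro t ht
        have h1 := hP t ht
        obtain ⟨hpl, hpu⟩ := abs_le.mp h1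
        simp only [hYd]
        linarith only [sq_nonneg (2*(y₀ + b*t) + d*(ε*t - t^2)),
          mul_nonneg (by linarith only [hpu] : (0:ℝ) ≤ η - (y₀ + b*t)) (by linarith only [hpl] : (0:ℝ) ≤ η + (y₀ + b*t))]
    have hval : ∫ t in (0:ℝ)..ε, ((d^2/2)*(ε*t - t^2)^2 - η^2) = (d^2/2)*(ε^5/30) - η^2*ε := by
      rw [intervalIntegral.integral_sub (by apply Continuous.intervalIntegrable; fun_prop)
          (intervalIntegrable_const), intervalIntegral.integral_const_mul, quartic,
          intervalIntegral.integral_const]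
      simp
      ring
    have hnum : (d^2/2)*(ε^5/30) = 4*c^2*ε/15 := by rw [hd]; field_simp; ring
    rw [hval, hnum] at hmono
    have hη2 : η^2 ≤ c^2/64 := by
      linarith only [mul_nonneg (by linarith only [hηc] : (0:ℝ) ≤ c - 8*η)
        (by linarith only [hηc, hη0.le] : (0:ℝ) ≤ c + 8*η)]
    linarith only [hmono, mul_le_mul_of_nonneg_right hη2 hε.le,
      (mul_pos (mul_pos hc0 hc0) hε)]
  have hI0 : 0 < I := lt_of_lt_of_le (by positivity) hIlow
  set Δ : ℝ := (x₁ + y₁^2/2) - (x₀ + y₀^2/2) with hΔd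
  clear_value Δ
  have hΔ : |Δ| ≤ 3*η := by
    rw [hΔd]
    obtain ⟨h1, h2⟩ := abs_le.mp hx₀
    obtain ⟨h3, h4⟩ := abs_le.mp hx₁
    obtain ⟨h5, h6⟩ := abs_le.mp hy₀
    obtain ⟨h7, h8⟩ := abs_le.mp hy₁
    rw [abs_le]
    constructor <;>
      linarith only [h1, h2, h3, h4, sq_nonneg y₀, sq_nonneg y₁,
        mul_nonneg (le_of_lt hη0) (sub_nonneg.2 hη1),
        mul_nonneg (by linarith only [h6] : (0:ℝ) ≤ η - y₀) (by linarith only [h5] : (0:ℝ) ≤ η + y₀),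
        mul_nonneg (by linarith only [h8] : (0:ℝ) ≤ η - y₁) (by linarith only [h7] : (0:ℝ) ≤ η + y₁)]
  set δ : ℝ := Δ / (3*I) with hδd
  clear_value δ
  have hδI : 3*δ*I = Δ := by rw [hδd]; field_simp [hI0.ne']
  have hδb : |δ| ≤ 4*η/(c^2*ε) := by
    rw [hδd, abs_div, abs_of_pos (by positivity : (0:ℝ) < 3*I)]
    calc |Δ|/(3*I) ≤ (3*η)/(3*(c^2*ε/4)) :=
          div_le_div₀ (by positivity) hΔ (by positivity) (by linarith)
      _ = 4*η/(c^2*ε) := by field_simp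
  have hδ1 : |δ| ≤ 1/25 := by
    refine hδb.trans ?_
    rw [div_le_div_iff₀ (by positivity) (by norm_num : (0:ℝ) < 25)]
    linarith only [hηA, mul_nonneg (sub_nonneg.2 he2ε) (sq_nonneg c),
      mul_nonneg (sub_nonneg.2 hA1) (le_of_lt hη0)]
  have hαδ : |α| * |δ| ≤ ε := by
    calc |α| * |δ| ≤ A*(4*η/(c^2*ε)) :=
          mul_le_mul hαA hδb (abs_nonneg δ) (le_of_lt hA0)
      _ ≤ ε := by
          rw [show A*(4*η/(c^2*ε)) = (4*A*η)/(c^2*ε) by ring, div_le_iff₀ (by positivity)]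
          linarith only [hηA, mul_le_mul_of_nonneg_left he22 (sq_nonneg c), sq_nonneg (c*ε)]
  -- derivatives
  have hint_cont : Continuous (fun s : ℝ => 3*δ*(Y s)^2) := continuous_const.mul (hYc.pow 2)
  have hWderiv : ∀ t, HasDerivAt
      (fun u : ℝ => (x₀ + y₀^2/2) + ∫ s in (0:ℝ)..u, 3*δ*(Y s)^2) (3*δ*(Y t)^2) t := fun t =>
    (intervalIntegral.integral_hasDerivAt_right (hint_cont.intervalIntegrable _ _)
      (hint_cont.stronglyMeasurableAtFilter _ _) hint_cont.continuousAt).const_add _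
  have hXderiv : ∀ t, HasDerivAt
      (fun u : ℝ => ((x₀ + y₀^2/2) + ∫ s in (0:ℝ)..u, 3*δ*(Y s)^2) - (Y u)^2/2)
      (3*δ*(Y t)^2 - Y t*DY t) t := by
    intro t
    have h2 : HasDerivAt (fun u => (Y u)^2/2) (Y t*DY t) t := by
      have h3 := ((hYderiv t).pow 2).div_const 2
      exact h3.congr_deriv (by push_cast; ring)
    exact (hWderiv t).sub h2
  have hzderiv : ∀ t, HasDerivAt
      (fun u : ℝ => Φ ![((x₀ + y₀^2/2) + ∫ s in (0:ℝ)..u, 3*δ*(Y s)^2) - (Y u)^2/2, Y u])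
      (Φ ![3*δ*(Y t)^2 - Y t*DY t, DY t]) t := by
    intro t
    exact Φ.hasFDerivAt.comp_hasDerivAt t (hasDerivAt_pi.mpr (by
      intro i; fin_cases i
      · simpa using hXderiv t
      · simpa using hYderiv t))
  have hVcont : Continuous (fun t : ℝ => Φ ![3*δ*(Y t)^2 - Y t*DY t, DY t]) := by
    apply Φ.continuous.comp
    apply continuous_pi
    intro i; fin_cases i
    · simp; fun_prop
    · simpa using hDYc
  have hzc : Continuous
      (fun t : ℝ => Φ ![((x₀ + y₀^2/2) + ∫ s in (0:ℝ)..t, 3*δ*(Y s)^2) - (Y t)^2/2, Y t]) :=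
    continuous_iff_continuousAt.2 fun t => (hzderiv t).continuousAt
  have hYε : Y ε = y₁ := by
    simp only [hYd, hb]
    field_simp
    ring
  -- numeric bounds for u₁
  have hb1 : (26/25)*(η+c) ≤ ε/25 := by
    have h := hηc
    rw [hc] at h ⊢
    linarith only [h, he3ε, hη0.le]
  have hb2 : 2*η/ε ≤ ε/4 := by
    rw [div_le_iff₀ hε]
    have h := hηc
    rw [hc] at h
    linarith only [h, he22, he3e2, sq_nonneg ε]
  have hb3 : 4*c/ε ≤ ε/25 := by
    rw [div_le_iff₀ hε, hc]
    linarith only [he22, he3e2, sq_nonneg ε]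
  refine ⟨fun t => (1+δ)*Y t - DY t, fun _ => α*(1-δ),
    fun t => Φ ![((x₀ + y₀^2/2) + ∫ s in (0:ℝ)..t, 3*δ*(Y s)^2) - (Y t)^2/2, Y t],
    ⟨((continuous_const.mul hYc).sub hDYc).aestronglyMeasurable, ?_⟩,
    ⟨aestronglyMeasurable_const, ?_⟩, ⟨hzc.continuousOn, ?_⟩, ?_, ?_⟩
  · -- bound on u₁
    filter_upwards [ae_restrict_mem measurableSet_Icc] with t ht
    have h1 := hYb t ht
    have h2 := hDYb t ht
    have h3 : |1+δ| ≤ 26/25 := by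
      calc |1+δ| ≤ |(1:ℝ)| + |δ| := abs_add_le _ _
        _ ≤ 26/25 := by rw [abs_one]; linarith only [hδ1]
    calc |(1+δ)*Y t - DY t| ≤ |(1+δ)*Y t| + |DY t| := abs_sub _ _
      _ = |1+δ| * |Y t| + |DY t| := by rw [abs_mul]
      _ ≤ (26/25)*(η+c) + (2*η/ε + 4*c/ε) := by
          apply add_le_add (mul_le_mul h3 h1 (abs_nonneg _) (by norm_num)) h2
      _ ≤ ε := by linarith only [hb1, hb2, hb3, hε]
  · -- bound on u₂ - α
    refine ae_of_all _ fun t => ?_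
    beta_reduce
    rw [show α*(1-δ) - α = -(α*δ) by ring, abs_neg, abs_mul]
    exact hαδ
  · -- the integral identity
    intro t ht
    have h2 : ∫ s in (0:ℝ)..t, Φ ![3*δ*(Y s)^2 - Y s*DY s, DY s] =
        Φ ![((x₀ + y₀^2/2) + ∫ s in (0:ℝ)..t, 3*δ*(Y s)^2) - (Y t)^2/2, Y t] -
        Φ ![((x₀ + y₀^2/2) + ∫ s in (0:ℝ)..(0:ℝ), 3*δ*(Y s)^2) - (Y 0)^2/2, Y 0] :=
      intervalIntegral.integral_eq_sub_of_hasDerivAt (fun s _ => hzderiv s)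
        ((hVcont.intervalIntegrable _ _))
    beta_reduce
    rw [intervalIntegral.integral_congr
      (g := fun s => Φ ![3*δ*(Y s)^2 - Y s*DY s, DY s])
      (fun s _ => integrand_eq α δ _ _ _ hα), h2]
    abel
  · -- z 0 = z₀
    have hY0 : Y 0 = y₀ := by simp [hYd]
    ext i
    fin_cases i
    · show ((x₀ + y₀^2/2) + ∫ s in (0:ℝ)..(0:ℝ), 3*δ*(Y s)^2) - (Y 0)^2/2 = z₀ 0
      rw [intervalIntegral.integral_same, hY0, ← hx₀d]
      ring
    · show Y 0 = z₀ 1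
      rw [hY0, ← hy₀d]
  · -- z ε = z₁
    rw [hI] at hδI
    rw [← intervalIntegral.integral_const_mul] at hδI
    ext i
    fin_cases i
    · show ((x₀ + y₀^2/2) + ∫ s in (0:ℝ)..ε, 3*δ*(Y s)^2) - (Y ε)^2/2 = z₁ 0
      rw [hδI, hYε, hΔd, ← hx₁d]
      ring
    · show Y ε = z₁ 1
      rw [hYε, ← hy₁d]
end
end

section
/- Let u₁ ∈ L∞([0,T],ℝ), set v₁(t) = ∫₀ᵗ u₁(σ) dσ, and for an integer r ≥ 2 define w_r(s) = (1/r!) ∫₀ˢ ∫₀^τ u₁(τ) (τ − σ)^r u₁(σ) dσ dτ. Then for every s ∈ (0,T], |w_r(s)| ≤ |v₁(s)| · (‖v₁‖_{L²(0,s)}/(r−1)!) · s^{r−1/2}/√(2r−1) + (‖v₁‖²_{L²(0,s)}/(r−2)!) · s^{r−1}/√((2r−3)(2r−2)). -/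
open MeasureTheory Set



-- triangle Fubini swap
lemma my_tri_swap {a b : ℝ} {F : ℝ → ℝ → ℝ}
    (hF : Integrable (fun p : ℝ × ℝ => F p.1 p.2)
      ((volume.restrict (Ioc a b)).prod (volume.restrict (Ioc a b)))) :
    (∫ τ in Ioc a b, ∫ σ in Ioc a τ, F τ σ) = ∫ σ in Ioc a b, ∫ τ in Ioc σ b, F τ σ := by
  set G : ℝ → ℝ → ℝ := fun τ σ => if σ ≤ τ then F τ σ else 0 with hG
  have hGint : Integrable (fun p : ℝ × ℝ => G p.1 p.2)
      ((volume.restrict (Ioc a b)).prod (volume.restrict (Ioc a b))) := by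
    have hmeas : MeasurableSet {p : ℝ × ℝ | p.2 ≤ p.1} :=
      (isClosed_le continuous_snd continuous_fst).measurableSet
    have : (fun p : ℝ × ℝ => G p.1 p.2)
        = {p : ℝ × ℝ | p.2 ≤ p.1}.indicator (fun p => F p.1 p.2) := by
      funext p
      by_cases h : p.2 ≤ p.1 <;> simp [hG, h, Set.indicator_apply]
    rw [this]
    exact hF.indicator hmeas
  have h1 : ∀ τ ∈ Ioc a b, (∫ σ in Ioc a τ, F τ σ) = ∫ σ in Ioc a b, G τ σ := by
    intro τ hτ
    have : (fun σ => G τ σ) = (Iic τ).indicator (fun σ => F τ σ) := by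
      funext σ; by_cases h : σ ≤ τ <;> simp [hG, h, Set.indicator_apply]
    rw [this, setIntegral_indicator measurableSet_Iic, Set.Ioc_inter_Iic,
      min_eq_right hτ.2]
  have h2 : ∀ σ ∈ Ioc a b, (∫ τ in Ioc σ b, F τ σ) = ∫ τ in Ioc a b, G τ σ := by
    intro σ hσ
    have : (fun τ => G τ σ) = (Ici σ).indicator (fun τ => F τ σ) := by
      funext τ; by_cases h : σ ≤ τ <;> simp [hG, h, Set.indicator_apply]
    rw [this, setIntegral_indicator measurableSet_Ici]
    have hset : Ioc a b ∩ Ici σ = Icc σ b := by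
      ext x
      simp only [mem_inter_iff, mem_Ioc, mem_Ici, mem_Icc]
      constructor
      · rintro ⟨⟨_, h2⟩, h3⟩; exact ⟨h3, h2⟩
      · rintro ⟨h1', h2'⟩; exact ⟨⟨lt_of_lt_of_le hσ.1 h1', h2'⟩, h1'⟩
    rw [hset, integral_Icc_eq_integral_Ioc]
  rw [setIntegral_congr_fun measurableSet_Ioc h1,
    setIntegral_congr_fun measurableSet_Ioc h2]
  exact integral_integral_swap hGint

lemma my_tri_prof {a b : ℝ} {F : ℝ → ℝ → ℝ}
    (hF : Integrable (fun p : ℝ × ℝ => F p.1 p.2)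
      ((volume.restrict (Ioc a b)).prod (volume.restrict (Ioc a b)))) :
    IntegrableOn (fun σ => ∫ τ in Ioc σ b, F τ σ) (Ioc a b) := by
  set G : ℝ → ℝ → ℝ := fun τ σ => if σ ≤ τ then F τ σ else 0 with hG
  have hmeas : MeasurableSet {p : ℝ × ℝ | p.2 ≤ p.1} :=
    (isClosed_le continuous_snd continuous_fst).measurableSet
  have hGint : Integrable (fun p : ℝ × ℝ => G p.1 p.2)
      ((volume.restrict (Ioc a b)).prod (volume.restrict (Ioc a b))) := by
    have : (fun p : ℝ × ℝ => G p.1 p.2)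
        = {p : ℝ × ℝ | p.2 ≤ p.1}.indicator (fun p => F p.1 p.2) := by
      funext p
      by_cases h : p.2 ≤ p.1 <;> simp [hG, h, Set.indicator_apply]
    rw [this]
    exact hF.indicator hmeas
  have hint : IntegrableOn (fun σ => ∫ τ in Ioc a b, G τ σ) (Ioc a b) :=
    hGint.integral_prod_right
  refine hint.congr_fun ?_ measurableSet_Ioc
  intro σ hσ
  show (∫ τ in Ioc a b, G τ σ) = ∫ τ in Ioc σ b, F τ σ
  have : (fun τ => G τ σ) = (Ici σ).indicator (fun τ => F τ σ) := by
    funext τ; by_cases h : σ ≤ τ <;> simp [hG, h, Set.indicator_apply]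
  rw [this, setIntegral_indicator measurableSet_Ici]
  have hset : Ioc a b ∩ Ici σ = Icc σ b := by
    ext x
    simp only [mem_inter_iff, mem_Ioc, mem_Ici, mem_Icc]
    constructor
    · rintro ⟨⟨_, h2⟩, h3⟩; exact ⟨h3, h2⟩
    · rintro ⟨h1', h2'⟩; exact ⟨⟨lt_of_lt_of_le hσ.1 h1', h2'⟩, h1'⟩
  rw [hset, integral_Icc_eq_integral_Ioc]


-- product integrability with a continuous kernel
lemma my_ker_int {a b : ℝ} {f g : ℝ → ℝ}
    (hf : IntegrableOn f (Ioc a b)) (hg : IntegrableOn g (Ioc a b))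
    {φ : ℝ × ℝ → ℝ} (hφ : Continuous φ) :
    Integrable (fun p : ℝ × ℝ => f p.1 * (φ p * g p.2))
      ((volume.restrict (Ioc a b)).prod (volume.restrict (Ioc a b))) := by
  have base : Integrable (fun p : ℝ × ℝ => f p.1 * g p.2)
      ((volume.restrict (Ioc a b)).prod (volume.restrict (Ioc a b))) :=
    hf.mul_prod hg
  obtain ⟨C, hC⟩ := (isCompact_Icc.prod (isCompact_Icc (a := a) (b := b))).exists_bound_of_continuousOn
    hφ.continuousOn
  have heq : (fun p : ℝ × ℝ => f p.1 * (φ p * g p.2))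
      = fun p : ℝ × ℝ => φ p * (f p.1 * g p.2) := by
    funext p; ring
  rw [heq]
  refine base.bdd_mul (c := C) hφ.aestronglyMeasurable ?_
  rw [Measure.prod_restrict]
  filter_upwards [ae_restrict_mem (measurableSet_Ioc.prod measurableSet_Ioc)] with p hp
  exact hC p ⟨Ioc_subset_Icc_self hp.1, Ioc_subset_Icc_self hp.2⟩

-- multiplication by continuous function preserves IntegrableOn on Ioc
lemma my_cont_mul {a b : ℝ} {f : ℝ → ℝ} (hf : IntegrableOn f (Ioc a b))
    {φ : ℝ → ℝ} (hφ : Continuous φ) :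
    IntegrableOn (fun x => φ x * f x) (Ioc a b) := by
  obtain ⟨C, hC⟩ := (isCompact_Icc (a := a) (b := b)).exists_bound_of_continuousOn
    hφ.continuousOn
  refine hf.bdd_mul (c := C) hφ.aestronglyMeasurable.restrict ?_
  filter_upwards [ae_restrict_mem measurableSet_Ioc] with x hx
  exact hC x (Ioc_subset_Icc_self hx)

-- membership in L² for continuous functions
lemma my_memL2 {a b : ℝ} {f : ℝ → ℝ} (hf : ContinuousOn f (Icc a b)) :
    MemLp f 2 (volume.restrict (Ioc a b)) := by
  obtain ⟨C, hC⟩ := (isCompact_Icc (a := a) (b := b)).exists_bound_of_continuousOn hf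
  refine MemLp.of_bound ((hf.mono Ioc_subset_Icc_self).aestronglyMeasurable measurableSet_Ioc)
    C ?_
  filter_upwards [ae_restrict_mem measurableSet_Ioc] with x hx
  exact hC x (Ioc_subset_Icc_self hx)

-- Cauchy–Schwarz
lemma my_cs {a b : ℝ} {f g : ℝ → ℝ}
    (hf : MemLp f 2 (volume.restrict (Ioc a b)))
    (hg : MemLp g 2 (volume.restrict (Ioc a b))) :
    |∫ x in Ioc a b, f x * g x| ≤
      Real.sqrt (∫ x in Ioc a b, f x ^ 2) * Real.sqrt (∫ x in Ioc a b, g x ^ 2) := by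
  have hpq : (2 : ℝ).HolderConjugate 2 := Real.HolderConjugate.two_two
  have h2 : ENNReal.ofReal (2:ℝ) = 2 := by norm_num [ENNReal.ofReal_ofNat]
  have key := integral_mul_norm_le_Lp_mul_Lq (μ := volume.restrict (Ioc a b)) hpq
    (by rw [h2]; exact hf) (by rw [h2]; exact hg)
  have habs : |∫ x in Ioc a b, f x * g x| ≤ ∫ x in Ioc a b, ‖f x‖ * ‖g x‖ := by
    calc |∫ x in Ioc a b, f x * g x| = ‖∫ x in Ioc a b, f x * g x‖ :=
          (Real.norm_eq_abs _).symm
      _ ≤ ∫ x in Ioc a b, ‖f x * g x‖ := norm_integral_le_integral_norm _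
      _ = ∫ x in Ioc a b, ‖f x‖ * ‖g x‖ := by
          congr 1; funext x; rw [norm_mul]
  have hf2 : (∫ x in Ioc a b, ‖f x‖ ^ (2:ℝ)) = ∫ x in Ioc a b, f x ^ 2 := by
    congr 1; funext x
    rw [show ((2:ℝ) = ((2:ℕ):ℝ)) by norm_num, Real.rpow_natCast]
    simp [sq_abs]
  have hg2 : (∫ x in Ioc a b, ‖g x‖ ^ (2:ℝ)) = ∫ x in Ioc a b, g x ^ 2 := by
    congr 1; funext x
    rw [show ((2:ℝ) = ((2:ℕ):ℝ)) by norm_num, Real.rpow_natCast]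
    simp [sq_abs]
  rw [hf2, hg2] at key
  calc |∫ x in Ioc a b, f x * g x| ≤ ∫ x in Ioc a b, ‖f x‖ * ‖g x‖ := habs
    _ ≤ (∫ x in Ioc a b, f x ^ 2) ^ (1/(2:ℝ)) * (∫ x in Ioc a b, g x ^ 2) ^ (1/(2:ℝ)) := key
    _ = _ := by rw [← Real.sqrt_eq_rpow, ← Real.sqrt_eq_rpow]

-- FTC-type computations
lemma my_ftc1 (n : ℕ) {σ τ : ℝ} (h : σ ≤ τ) :
    ∫ x in Ioc σ τ, (((n:ℝ)+1) * (τ - x) ^ n) = (τ - σ) ^ (n+1) := by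
  rw [← intervalIntegral.integral_of_le h, intervalIntegral.integral_const_mul,
    intervalIntegral.integral_comp_sub_left (fun u => u ^ n) τ, sub_self,
    integral_pow]
  field_simp
  simp

lemma my_ftc2 (n : ℕ) (x : ℝ) {τ s : ℝ} (h : τ ≤ s) :
    ∫ y in Ioc τ s, (((n:ℝ)+1) * (y - x) ^ n) = (s - x) ^ (n+1) - (τ - x) ^ (n+1) := by
  rw [← intervalIntegral.integral_of_le h, intervalIntegral.integral_const_mul,
    intervalIntegral.integral_comp_sub_right (fun u => u ^ n) x, integral_pow]
  field_simp

lemma my_pow_int {s : ℝ} (hs : 0 ≤ s) (n : ℕ) :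
    ∫ x in Ioc 0 s, x ^ n = s ^ (n+1) / ((n:ℝ)+1) := by
  rw [← intervalIntegral.integral_of_le hs, integral_pow]
  norm_num

lemma my_pow_int' {s : ℝ} (hs : 0 ≤ s) (n : ℕ) :
    ∫ x in Ioc 0 s, (s - x) ^ n = s ^ (n+1) / ((n:ℝ)+1) := by
  rw [← intervalIntegral.integral_of_le hs,
    intervalIntegral.integral_comp_sub_left (fun u => u ^ n) s, sub_self, sub_zero,
    integral_pow]
  norm_num

lemma my_sqrt_pow {s : ℝ} (hs : 0 ≤ s) (n : ℕ) :
    Real.sqrt (s ^ n) = s ^ ((n:ℝ)/2) := by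
  rw [Real.sqrt_eq_rpow, ← Real.rpow_natCast s n, ← Real.rpow_mul hs,
    show (n:ℝ) * (1/2) = (n:ℝ)/2 by ring]

/-- Bound on `w_r(s) = (1/r!) ∫₀ˢ ∫₀^τ u₁(τ)(τ−σ)^r u₁(σ) dσ dτ` for `r ≥ 2` and
`s ∈ (0,T]`:
`|w_r(s)| ≤ |v₁(s)| (‖v₁‖_{L²(0,s)}/(r−1)!) s^{r−1/2}/√(2r−1)
            + (‖v₁‖²_{L²(0,s)}/(r−2)!) s^{r−1}/√((2r−3)(2r−2))`. -/
theorem stmt19 (T : ℝ) (u₁ : ℝ → ℝ)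
    (hu₁ : MemLp u₁ ⊤ (volume.restrict (Icc 0 T)))
    (v₁ : ℝ → ℝ) (hv₁ : v₁ = fun t => ∫ σ in (0:ℝ)..t, u₁ σ)
    (r : ℕ) (hr : 2 ≤ r)
    (w : ℝ → ℝ)
    (hw : w = fun s => ((r.factorial : ℝ))⁻¹ *
      ∫ τ in (0:ℝ)..s, ∫ σ in (0:ℝ)..τ, u₁ τ * (τ - σ) ^ r * u₁ σ) :
    ∀ s ∈ Ioc (0:ℝ) T,
      |w s| ≤ |v₁ s| * (Real.sqrt (∫ τ in (0:ℝ)..s, (v₁ τ) ^ 2) / ((r - 1).factorial : ℝ))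
            * (s ^ ((r : ℝ) - 1/2) / Real.sqrt (2 * (r : ℝ) - 1))
          + ((∫ τ in (0:ℝ)..s, (v₁ τ) ^ 2) / ((r - 2).factorial : ℝ))
            * (s ^ ((r : ℝ) - 1) / Real.sqrt ((2 * (r : ℝ) - 3) * (2 * (r : ℝ) - 2))) := by
  obtain ⟨m, rfl⟩ : ∃ m, r = m + 2 := ⟨r - 2, by omega⟩
  rintro s ⟨hs0, hsT⟩
  -- basic integrability and continuity facts
  have huT : IntegrableOn u₁ (Icc 0 T) volume := hu₁.integrable le_top
  have huIoc : ∀ {x y : ℝ}, 0 ≤ x → y ≤ s → IntegrableOn u₁ (Ioc x y) volume := by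
    intro x y hx hy
    exact huT.mono_set (fun t ht => ⟨hx.trans ht.1.le, ht.2.trans (hy.trans hsT)⟩)
  have hvx : ∀ x : ℝ, 0 ≤ x → v₁ x = ∫ t in Ioc 0 x, u₁ t := by
    intro x hx
    simp only [hv₁]
    exact intervalIntegral.integral_of_le hx
  have hvc : ContinuousOn v₁ (Icc 0 s) := by
    have := intervalIntegral.continuousOn_primitive (f := u₁) (a := 0) (b := s) (μ := volume)
      (huT.mono_set (Icc_subset_Icc le_rfl hsT))
    exact this.congr (fun x hx => hvx x hx.1)
  have hvIcc : IntegrableOn v₁ (Icc 0 s) volume := hvc.integrableOn_Icc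
  have hvIoc : ∀ {x y : ℝ}, 0 ≤ x → y ≤ s → IntegrableOn v₁ (Ioc x y) volume := by
    intro x y hx hy
    exact hvIcc.mono_set (fun t ht => ⟨hx.trans ht.1.le, ht.2.trans hy⟩)
  have hvdiff : ∀ x y : ℝ, 0 ≤ x → x ≤ y → y ≤ s → (∫ τ in Ioc x y, u₁ τ) = v₁ y - v₁ x := by
    intro x y hx hxy hys
    have h1 : IntervalIntegrable u₁ volume 0 y :=
      (intervalIntegrable_iff_integrableOn_Ioc_of_le (hx.trans hxy)).2 (huIoc le_rfl hys)
    have h2 : IntervalIntegrable u₁ volume 0 x :=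
      (intervalIntegrable_iff_integrableOn_Ioc_of_le hx).2 (huIoc le_rfl (hxy.trans hys))
    rw [← intervalIntegral.integral_of_le hxy]
    simp only [hv₁]
    exact (intervalIntegral.integral_interval_sub_left h1 h2).symm
  -- main objects
  set K : ℝ := ∫ x in Ioc 0 s, (v₁ x) ^ 2 with hK
  set P : ℝ := ∫ x in Ioc 0 s, (s - x) ^ (m+1) * v₁ x with hP
  set Q : ℝ := ∫ y in Ioc 0 s, v₁ y * ∫ x in Ioc 0 y, (y - x) ^ m * v₁ x with hQ
  have hK0 : 0 ≤ K := setIntegral_nonneg measurableSet_Ioc (fun x _ => sq_nonneg _)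
  -- step A : inner integration by parts
  have hsA : ∀ τ ∈ Ioc (0:ℝ) s,
      (∫ x in Ioc 0 τ, (((m:ℝ)+2) * (τ - x) ^ (m+1)) * v₁ x)
        = ∫ σ in Ioc 0 τ, (τ - σ) ^ (m+2) * u₁ σ := by
    intro τ hτ
    have hker : Integrable (fun p : ℝ × ℝ => (((m:ℝ)+2) * (τ - p.1) ^ (m+1)) * u₁ p.2)
        ((volume.restrict (Ioc 0 τ)).prod (volume.restrict (Ioc 0 τ))) :=
      ((continuous_const.mul ((continuous_const.sub continuous_id).pow _) :
          Continuous (fun x : ℝ => ((m:ℝ)+2) * (τ - x) ^ (m+1))).integrableOn_Ioc :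
          IntegrableOn (fun x : ℝ => ((m:ℝ)+2) * (τ - x) ^ (m+1)) (Ioc 0 τ) volume).mul_prod
        (huIoc le_rfl hτ.2)
    have e1 : (∫ x in Ioc 0 τ, (((m:ℝ)+2) * (τ - x) ^ (m+1)) * v₁ x)
        = ∫ x in Ioc 0 τ, ∫ σ in Ioc 0 x, (((m:ℝ)+2) * (τ - x) ^ (m+1)) * u₁ σ := by
      refine setIntegral_congr_fun measurableSet_Ioc (fun x hx => ?_)
      rw [hvx x hx.1.le, integral_const_mul]
    have e2 := my_tri_swap (a := (0:ℝ)) (b := τ)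
      (F := fun x σ => (((m:ℝ)+2) * (τ - x) ^ (m+1)) * u₁ σ) hker
    rw [e1, e2]
    refine setIntegral_congr_fun measurableSet_Ioc (fun σ hσ => ?_)
    rw [integral_mul_const]
    have ec : (∫ x in Ioc σ τ, (((m:ℝ)+2) * (τ - x) ^ (m+1)))
        = ∫ x in Ioc σ τ, ((((m+1:ℕ):ℝ)+1) * (τ - x) ^ (m+1)) := by
      refine setIntegral_congr_fun measurableSet_Ioc (fun x _ => ?_)
      push_cast; ring
    rw [ec, my_ftc1 (m+1) hσ.2]
  -- the double-integral object
  have hint2 : Integrable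
      (fun p : ℝ × ℝ => u₁ p.1 * ((((m:ℝ)+2) * (p.1 - p.2) ^ (m+1)) * v₁ p.2))
      ((volume.restrict (Ioc 0 s)).prod (volume.restrict (Ioc 0 s))) :=
    my_ker_int (huIoc le_rfl le_rfl) (hvIoc le_rfl le_rfl)
      (continuous_const.mul ((continuous_fst.sub continuous_snd).pow _))
  have hswap2 := my_tri_swap (a := (0:ℝ)) (b := s)
    (F := fun τ x => u₁ τ * ((((m:ℝ)+2) * (τ - x) ^ (m+1)) * v₁ x)) hint2
  have hprof2 := my_tri_prof (a := (0:ℝ)) (b := s)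
    (F := fun τ x => u₁ τ * ((((m:ℝ)+2) * (τ - x) ^ (m+1)) * v₁ x)) hint2
  have hDrep : (∫ τ in Ioc 0 s, ∫ σ in Ioc 0 τ, u₁ τ * (τ - σ) ^ (m+2) * u₁ σ)
      = ∫ x in Ioc 0 s, ∫ τ in Ioc x s, u₁ τ * ((((m:ℝ)+2) * (τ - x) ^ (m+1)) * v₁ x) := by
    rw [← hswap2]
    refine setIntegral_congr_fun measurableSet_Ioc (fun τ hτ => ?_)
    calc (∫ σ in Ioc 0 τ, u₁ τ * (τ - σ)^(m+2) * u₁ σ)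
        = ∫ σ in Ioc 0 τ, u₁ τ * ((τ - σ)^(m+2) * u₁ σ) :=
          setIntegral_congr_fun measurableSet_Ioc (fun σ _ => by ring)
      _ = u₁ τ * ∫ σ in Ioc 0 τ, (τ - σ)^(m+2) * u₁ σ := integral_const_mul _ _
      _ = u₁ τ * ∫ x in Ioc 0 τ, (((m:ℝ)+2) * (τ - x)^(m+1)) * v₁ x := by rw [hsA τ hτ]
      _ = ∫ x in Ioc 0 τ, u₁ τ * ((((m:ℝ)+2) * (τ - x)^(m+1)) * v₁ x) :=
          (integral_const_mul _ _).symm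
  -- step B : outer integration by parts pointwise
  have hB : ∀ x ∈ Ioc (0:ℝ) s,
      (∫ τ in Ioc x s, u₁ τ * ((((m:ℝ)+2) * (τ - x) ^ (m+1)) * v₁ x))
        = (((m:ℝ)+2) * v₁ s * (s - x)^(m+1)) * v₁ x
          - (((m:ℝ)+2) * ((m:ℝ)+1)) * (v₁ x * ∫ y in Ioc x s, (y - x)^m * v₁ y) := by
    intro x hx
    have hx0 : (0:ℝ) ≤ x := hx.1.le
    have hxs : x ≤ s := hx.2
    have hu' : IntegrableOn u₁ (Ioc x s) volume := huIoc hx0 le_rfl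
    have hcore : (∫ τ in Ioc x s, (τ - x)^(m+1) * u₁ τ)
        = (s - x)^(m+1) * v₁ s - ((m:ℝ)+1) * ∫ y in Ioc x s, (y - x)^m * v₁ y := by
      have int1 : IntegrableOn (fun τ => (s - x)^(m+1) * u₁ τ) (Ioc x s) volume :=
        hu'.const_mul _
      have int2 : IntegrableOn
          (fun τ => (∫ y in Ioc τ s, (((m:ℝ)+1) * (y - x)^m)) * u₁ τ) (Ioc x s) volume := by
        have c2 : IntegrableOn
            (fun τ => ((s - x)^(m+1) - (τ - x)^(m+1)) * u₁ τ) (Ioc x s) volume :=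
          my_cont_mul hu'
            (continuous_const.sub ((continuous_id.sub continuous_const).pow _))
        refine c2.congr_fun (fun τ hτ => ?_) measurableSet_Ioc
        rw [my_ftc2 m x hτ.2]
      have e0 : (∫ τ in Ioc x s, (τ - x)^(m+1) * u₁ τ)
          = ∫ τ in Ioc x s, ((s - x)^(m+1) * u₁ τ
              - (∫ y in Ioc τ s, (((m:ℝ)+1) * (y - x)^m)) * u₁ τ) := by
        refine setIntegral_congr_fun measurableSet_Ioc (fun τ hτ => ?_)
        rw [my_ftc2 m x hτ.2]; ring
      rw [e0, integral_sub int1 int2]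
      have f1 : (∫ τ in Ioc x s, (s - x)^(m+1) * u₁ τ) = (s - x)^(m+1) * (v₁ s - v₁ x) := by
        rw [integral_const_mul, hvdiff x s hx0 hxs le_rfl]
      have hker3 : Integrable (fun p : ℝ × ℝ => (((m:ℝ)+1) * (p.1 - x)^m) * u₁ p.2)
          ((volume.restrict (Ioc x s)).prod (volume.restrict (Ioc x s))) :=
        ((continuous_const.mul ((continuous_id.sub continuous_const).pow _) :
          Continuous (fun y : ℝ => ((m:ℝ)+1) * (y - x) ^ m)).integrableOn_Ioc :
          IntegrableOn (fun y : ℝ => ((m:ℝ)+1) * (y - x) ^ m) (Ioc x s) volume).mul_prod hu'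
      have hswap3 := (my_tri_swap (a := x) (b := s)
        (F := fun y τ => (((m:ℝ)+1) * (y - x)^m) * u₁ τ) hker3).symm
      have f2 : (∫ τ in Ioc x s, (∫ y in Ioc τ s, (((m:ℝ)+1) * (y - x)^m)) * u₁ τ)
          = ∫ y in Ioc x s, (((m:ℝ)+1) * (y - x)^m) * (v₁ y - v₁ x) := by
        have e1 : (∫ τ in Ioc x s, (∫ y in Ioc τ s, (((m:ℝ)+1) * (y - x)^m)) * u₁ τ)
            = ∫ τ in Ioc x s, ∫ y in Ioc τ s, ((((m:ℝ)+1) * (y - x)^m) * u₁ τ) := by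
          refine setIntegral_congr_fun measurableSet_Ioc (fun τ _ => ?_)
          rw [integral_mul_const]
        rw [e1, hswap3]
        refine setIntegral_congr_fun measurableSet_Ioc (fun y hy => ?_)
        rw [integral_const_mul, hvdiff x y hx0 hy.1.le hy.2]
      have int3 : IntegrableOn (fun y => (((m:ℝ)+1) * (y - x)^m) * v₁ y) (Ioc x s) volume :=
        my_cont_mul (hvIoc hx0 le_rfl)
          (continuous_const.mul ((continuous_id.sub continuous_const).pow _))
      have int4 : IntegrableOn (fun y => (((m:ℝ)+1) * (y - x)^m) * v₁ x) (Ioc x s) volume :=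
        ((continuous_const.mul ((continuous_id.sub continuous_const).pow _) :
          Continuous (fun y : ℝ => ((m:ℝ)+1) * (y - x) ^ m)).integrableOn_Ioc :
          IntegrableOn (fun y : ℝ => ((m:ℝ)+1) * (y - x) ^ m) (Ioc x s) volume).mul_const _
      have fconst : (∫ y in Ioc x s, (((m:ℝ)+1) * (y - x)^m)) = (s - x)^(m+1) := by
        rw [my_ftc2 m x hxs]
        simp
      have f3 : (∫ y in Ioc x s, (((m:ℝ)+1) * (y - x)^m) * (v₁ y - v₁ x))
          = (∫ y in Ioc x s, (((m:ℝ)+1) * (y - x)^m) * v₁ y) - (s - x)^(m+1) * v₁ x := by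
        have e2 : (∫ y in Ioc x s, (((m:ℝ)+1) * (y - x)^m) * (v₁ y - v₁ x))
            = ∫ y in Ioc x s, ((((m:ℝ)+1) * (y - x)^m) * v₁ y
                - (((m:ℝ)+1) * (y - x)^m) * v₁ x) := by
          refine setIntegral_congr_fun measurableSet_Ioc (fun y _ => ?_)
          ring
        rw [e2, integral_sub int3 int4, integral_mul_const, fconst]
      have f4 : (∫ y in Ioc x s, (((m:ℝ)+1) * (y - x)^m) * v₁ y)
          = ((m:ℝ)+1) * ∫ y in Ioc x s, (y - x)^m * v₁ y := by
        rw [← integral_const_mul]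
        refine setIntegral_congr_fun measurableSet_Ioc (fun y _ => ?_)
        ring
      rw [f1, f2, f3, f4]
      ring
    calc (∫ τ in Ioc x s, u₁ τ * ((((m:ℝ)+2) * (τ - x) ^ (m+1)) * v₁ x))
        = ∫ τ in Ioc x s, ((((m:ℝ)+2) * v₁ x) * ((τ - x) ^ (m+1) * u₁ τ)) := by
          refine setIntegral_congr_fun measurableSet_Ioc (fun τ _ => ?_)
          ring
      _ = (((m:ℝ)+2) * v₁ x) * ∫ τ in Ioc x s, (τ - x) ^ (m+1) * u₁ τ := integral_const_mul _ _
      _ = _ := by rw [hcore]; ring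
  -- helper for sqrt of powers
  -- identity assembly
  have hg12 : IntegrableOn (fun x => (((m:ℝ)+2) * v₁ s * (s - x)^(m+1)) * v₁ x
      - (((m:ℝ)+2) * ((m:ℝ)+1)) * (v₁ x * ∫ y in Ioc x s, (y - x)^m * v₁ y)) (Ioc 0 s) volume :=
    hprof2.congr_fun hB measurableSet_Ioc
  have hg1 : IntegrableOn (fun x => (((m:ℝ)+2) * v₁ s * (s - x)^(m+1)) * v₁ x) (Ioc 0 s) volume :=
    my_cont_mul (hvIoc le_rfl le_rfl)
      (continuous_const.mul ((continuous_const.sub continuous_id).pow _))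
  have hg2 : IntegrableOn (fun x => (((m:ℝ)+2) * ((m:ℝ)+1))
      * (v₁ x * ∫ y in Ioc x s, (y - x)^m * v₁ y)) (Ioc 0 s) volume := by
    have h' := hg1.sub hg12
    refine MeasureTheory.IntegrableOn.congr_fun h' (fun x _ => ?_) measurableSet_Ioc
    simp only [Pi.sub_apply]
    ring
  have hker4 : Integrable (fun p : ℝ × ℝ => v₁ p.1 * ((p.1 - p.2)^m * v₁ p.2))
      ((volume.restrict (Ioc 0 s)).prod (volume.restrict (Ioc 0 s))) :=
    my_ker_int (hvIoc le_rfl le_rfl) (hvIoc le_rfl le_rfl)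
      ((continuous_fst.sub continuous_snd).pow _)
  have hswap4 := my_tri_swap (a := (0:ℝ)) (b := s)
    (F := fun y x => v₁ y * ((y - x)^m * v₁ x)) hker4
  have hQ' : (∫ x in Ioc 0 s, v₁ x * ∫ y in Ioc x s, (y - x)^m * v₁ y) = Q := by
    have l1 : (∫ x in Ioc 0 s, v₁ x * ∫ y in Ioc x s, (y - x)^m * v₁ y)
        = ∫ x in Ioc 0 s, ∫ y in Ioc x s, v₁ y * ((y - x)^m * v₁ x) := by
      refine setIntegral_congr_fun measurableSet_Ioc (fun x _ => ?_)
      rw [← integral_const_mul]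
      exact setIntegral_congr_fun measurableSet_Ioc (fun y _ => by ring)
    rw [l1, ← hswap4, hQ]
    refine setIntegral_congr_fun measurableSet_Ioc (fun y _ => ?_)
    rw [integral_const_mul]
  have hDval : (∫ τ in Ioc 0 s, ∫ σ in Ioc 0 τ, u₁ τ * (τ - σ)^(m+2) * u₁ σ)
      = ((m:ℝ)+2) * v₁ s * P - (((m:ℝ)+2) * ((m:ℝ)+1)) * Q := by
    rw [hDrep, setIntegral_congr_fun measurableSet_Ioc hB, integral_sub hg1 hg2]
    congr 1
    · rw [hP, ← integral_const_mul]
      exact setIntegral_congr_fun measurableSet_Ioc (fun x _ => by ring)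
    · rw [integral_const_mul, hQ']
  have hID : w s = v₁ s * P / (((m+1).factorial : ℕ) : ℝ) - Q / ((m.factorial : ℕ) : ℝ) := by
    have hw' : w s = (((m+2).factorial : ℕ) : ℝ)⁻¹
        * ∫ τ in Ioc 0 s, ∫ σ in Ioc 0 τ, u₁ τ * (τ - σ)^(m+2) * u₁ σ := by
      rw [hw]
      simp only
      rw [intervalIntegral.integral_of_le hs0.le]
      congr 1
      refine setIntegral_congr_fun measurableSet_Ioc (fun τ hτ => ?_)
      rw [intervalIntegral.integral_of_le hτ.1.le]
    rw [hw', hDval]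
    have hfac : (((m+2).factorial : ℕ) : ℝ) = ((m:ℝ)+2) * (((m:ℝ)+1) * ((m.factorial : ℕ) : ℝ)) := by
      rw [show m+2 = (m+1)+1 from rfl, Nat.factorial_succ, Nat.factorial_succ]
      push_cast
      ring
    have hfac1 : (((m+1).factorial : ℕ) : ℝ) = ((m:ℝ)+1) * ((m.factorial : ℕ) : ℝ) := by
      rw [Nat.factorial_succ]
      push_cast
      ring
    have h1 : ((m.factorial : ℕ) : ℝ) ≠ 0 := Nat.cast_ne_zero.2 m.factorial_ne_zero
    have h2 : ((m:ℝ)+1) ≠ 0 := by positivity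
    have h3 : ((m:ℝ)+2) ≠ 0 := by positivity
    rw [hfac, hfac1]
    field_simp
  -- bound for P
  have hMv : MemLp v₁ 2 (volume.restrict (Ioc 0 s)) := my_memL2 hvc
  have hPb : |P| ≤ Real.sqrt K * (s ^ (((m:ℝ)+2) - 1/2) / Real.sqrt (2*((m:ℝ)+2) - 1)) := by
    have cs := my_cs (f := fun x => (s - x)^(m+1)) (g := v₁)
      (my_memL2 ((continuous_const.sub continuous_id).pow _).continuousOn) hMv
    rw [← hP, ← hK] at cs
    have c1 : (∫ x in Ioc 0 s, ((fun x => (s - x)^(m+1)) x) ^ 2)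
        = s^(2*m+2+1) / (((2*m+2:ℕ):ℝ)+1) := by
      rw [← my_pow_int' hs0.le (2*m+2)]
      refine setIntegral_congr_fun measurableSet_Ioc (fun x _ => ?_)
      rw [← pow_mul]
      ring_nf
    rw [c1] at cs
    refine cs.trans ?_
    rw [mul_comm]
    gcongr
    rw [Real.sqrt_div (by positivity) _, my_sqrt_pow hs0.le]
    rw [show ((2*m+2+1:ℕ):ℝ)/2 = ((m:ℝ)+2) - 1/2 by push_cast; ring,
      show (((2*m+2:ℕ):ℝ)+1) = 2*((m:ℝ)+2) - 1 by push_cast; ring]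
  -- bound for Q
  have hsm : ((2*m+1:ℕ):ℝ) = 2*((m:ℝ)+2) - 3 := by push_cast; ring
  have hsm2 : ((2*m+2:ℕ):ℝ) = 2*((m:ℝ)+2) - 2 := by push_cast; ring
  have hinner : ∀ y ∈ Ioc (0:ℝ) s, |∫ x in Ioc 0 y, (y - x)^m * v₁ x|
      ≤ Real.sqrt (y^(2*m+1)) / Real.sqrt (2*((m:ℝ)+2) - 3) * Real.sqrt K := by
    intro y hy
    have hy0 : (0:ℝ) ≤ y := hy.1.le
    have cs := my_cs (f := fun x => (y - x)^m) (g := v₁)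
      (my_memL2 ((continuous_const.sub continuous_id).pow _).continuousOn)
      (my_memL2 (hvc.mono (Icc_subset_Icc le_rfl hy.2)))
    have c1 : (∫ x in Ioc 0 y, ((fun x => (y - x)^m) x) ^ 2)
        = y^(2*m+1) / (((2*m:ℕ):ℝ)+1) := by
      rw [← my_pow_int' hy0 (2*m)]
      refine setIntegral_congr_fun measurableSet_Ioc (fun x _ => ?_)
      rw [← pow_mul]
      ring_nf
    rw [c1] at cs
    refine cs.trans ?_
    have hvsub : (∫ x in Ioc 0 y, v₁ x ^ 2) ≤ K := by
      rw [hK]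
      have hv2int : IntegrableOn (fun x => v₁ x ^ 2) (Ioc 0 s) volume :=
        ((hvc.pow 2).integrableOn_Icc).mono_set Ioc_subset_Icc_self
      refine setIntegral_mono_set hv2int ?_ ?_
      · exact Filter.Eventually.of_forall fun x => by simpa using sq_nonneg (v₁ x)
      · exact HasSubset.Subset.eventuallyLE (Ioc_subset_Ioc le_rfl hy.2)
    have e : Real.sqrt (y^(2*m+1) / (((2*m:ℕ):ℝ)+1))
        = Real.sqrt (y^(2*m+1)) / Real.sqrt (2*((m:ℝ)+2) - 3) := by
      rw [Real.sqrt_div (by positivity) _,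
        show (((2*m:ℕ):ℝ)+1) = 2*((m:ℝ)+2) - 3 by push_cast; ring]
    rw [e]
    exact mul_le_mul_of_nonneg_left (Real.sqrt_le_sqrt hvsub) (by positivity)
  have habs : IntegrableOn (fun y => |v₁ y|) (Ioc 0 s) volume := (hvIoc le_rfl le_rfl).abs
  have hBint : IntegrableOn (fun y => (Real.sqrt (y^(2*m+1)) / Real.sqrt (2*((m:ℝ)+2) - 3)
      * Real.sqrt K) * |v₁ y|) (Ioc 0 s) volume :=
    my_cont_mul habs ((((continuous_pow (2*m+1)).sqrt).div_const _).mul continuous_const)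
  have hQb1 : |Q| ≤ ∫ y in Ioc 0 s, (Real.sqrt (y^(2*m+1)) / Real.sqrt (2*((m:ℝ)+2) - 3)
      * Real.sqrt K) * |v₁ y| := by
    rw [hQ]
    calc |∫ y in Ioc 0 s, v₁ y * ∫ x in Ioc 0 y, (y - x)^m * v₁ x|
        = ‖∫ y in Ioc 0 s, v₁ y * ∫ x in Ioc 0 y, (y - x)^m * v₁ x‖ := (Real.norm_eq_abs _).symm
      _ ≤ ∫ y in Ioc 0 s, ‖v₁ y * ∫ x in Ioc 0 y, (y - x)^m * v₁ x‖ :=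
          norm_integral_le_integral_norm _
      _ ≤ _ := by
          refine integral_mono_of_nonneg (Filter.Eventually.of_forall fun y => norm_nonneg _) hBint ?_
          filter_upwards [ae_restrict_mem measurableSet_Ioc] with y hy
          rw [norm_mul, Real.norm_eq_abs, Real.norm_eq_abs, mul_comm]
          exact mul_le_mul_of_nonneg_right (hinner y hy) (abs_nonneg _)
  have hvv : (∫ y in Ioc 0 s, |v₁ y| * Real.sqrt (y^(2*m+1)))
      ≤ Real.sqrt K * (s^(m+1) / Real.sqrt (2*((m:ℝ)+2) - 2)) := by
    have cs := my_cs (f := fun y => |v₁ y|) (g := fun y => Real.sqrt (y^(2*m+1)))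
      (my_memL2 hvc.abs)
      (my_memL2 ((continuous_pow (2*m+1)).sqrt).continuousOn)
    have c1 : (∫ y in Ioc 0 s, ((fun y => |v₁ y|) y) ^ 2) = K := by
      rw [hK]
      exact setIntegral_congr_fun measurableSet_Ioc (fun y _ => sq_abs _)
    have c2 : (∫ y in Ioc 0 s, ((fun y => Real.sqrt (y^(2*m+1))) y) ^ 2)
        = s^(2*m+1+1) / (((2*m+1:ℕ):ℝ)+1) := by
      rw [← my_pow_int hs0.le (2*m+1)]
      refine setIntegral_congr_fun measurableSet_Ioc (fun y hy => ?_)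
      simp only
      rw [sq, Real.mul_self_sqrt (pow_nonneg hy.1.le _)]
    rw [c1, c2] at cs
    refine (le_abs_self _).trans (cs.trans ?_)
    gcongr
    rw [Real.sqrt_div (by positivity) _]
    rw [show (2*m+1+1) = (m+1)*2 by ring, pow_mul, Real.sqrt_sq (pow_nonneg hs0.le _),
      show (((2*m+1:ℕ):ℝ)+1) = 2*((m:ℝ)+2) - 2 by push_cast; ring]
  have hm3 : (0:ℝ) < 2*((m:ℝ)+2) - 3 := by
    have : (0:ℝ) ≤ (m:ℝ) := Nat.cast_nonneg m
    linarith
  have hm2 : (0:ℝ) < 2*((m:ℝ)+2) - 2 := by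
    have : (0:ℝ) ≤ (m:ℝ) := Nat.cast_nonneg m
    linarith
  have hQb : |Q| ≤ K * (s ^ (((m:ℝ)+2) - 1)
      / Real.sqrt ((2*((m:ℝ)+2) - 3) * (2*((m:ℝ)+2) - 2))) := by
    refine hQb1.trans ?_
    have e1 : (∫ y in Ioc 0 s, (Real.sqrt (y^(2*m+1)) / Real.sqrt (2*((m:ℝ)+2) - 3)
        * Real.sqrt K) * |v₁ y|)
        = (Real.sqrt K / Real.sqrt (2*((m:ℝ)+2) - 3))
          * ∫ y in Ioc 0 s, |v₁ y| * Real.sqrt (y^(2*m+1)) := by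
      rw [← integral_const_mul]
      exact setIntegral_congr_fun measurableSet_Ioc (fun y _ => by ring)
    rw [e1]
    have step : (Real.sqrt K / Real.sqrt (2*((m:ℝ)+2) - 3))
        * (∫ y in Ioc 0 s, |v₁ y| * Real.sqrt (y^(2*m+1)))
        ≤ (Real.sqrt K / Real.sqrt (2*((m:ℝ)+2) - 3))
          * (Real.sqrt K * (s^(m+1) / Real.sqrt (2*((m:ℝ)+2) - 2))) := by
      refine mul_le_mul_of_nonneg_left hvv (by positivity)
    refine step.trans (le_of_eq ?_)
    have e3 : (Real.sqrt K / Real.sqrt (2*((m:ℝ)+2) - 3))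
          * (Real.sqrt K * (s^(m+1) / Real.sqrt (2*((m:ℝ)+2) - 2)))
        = (Real.sqrt K * Real.sqrt K)
          * (s^(m+1) / (Real.sqrt (2*((m:ℝ)+2) - 3) * Real.sqrt (2*((m:ℝ)+2) - 2))) := by
      ring
    rw [e3, Real.mul_self_sqrt hK0, show ((m:ℝ)+2) - 1 = ((m+1:ℕ):ℝ) by push_cast; ring,
      Real.rpow_natCast, Real.sqrt_mul hm3.le]
  -- final assembly
  rw [intervalIntegral.integral_of_le hs0.le, ← hK,
    show m+2-1 = m+1 by omega, show m+2-2 = m by omega,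
    show ((m+2:ℕ):ℝ) = (m:ℝ)+2 by push_cast; ring]
  have tri : ∀ a b : ℝ, |a - b| ≤ |a| + |b| := fun a b => by
    simpa [sub_eq_add_neg, abs_neg] using abs_add_le a (-b)
  have hfp1 : (0:ℝ) < (((m+1).factorial : ℕ) : ℝ) := by
    exact_mod_cast Nat.factorial_pos (m+1)
  have hfp0 : (0:ℝ) < ((m.factorial : ℕ) : ℝ) := by
    exact_mod_cast Nat.factorial_pos m
  calc |w s| = |v₁ s * P / (((m+1).factorial : ℕ) : ℝ) - Q / ((m.factorial : ℕ) : ℝ)| := by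
        rw [hID]
    _ ≤ |v₁ s * P / (((m+1).factorial : ℕ) : ℝ)| + |Q / ((m.factorial : ℕ) : ℝ)| := tri _ _
    _ = |v₁ s| * |P| / (((m+1).factorial : ℕ) : ℝ) + |Q| / ((m.factorial : ℕ) : ℝ) := by
        rw [abs_div, abs_div, abs_mul, abs_of_pos hfp1, abs_of_pos hfp0]
    _ ≤ |v₁ s| * (Real.sqrt K * (s ^ (((m:ℝ)+2) - 1/2) / Real.sqrt (2*((m:ℝ)+2) - 1)))
          / (((m+1).factorial : ℕ) : ℝ)
        + (K * (s ^ (((m:ℝ)+2) - 1)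
            / Real.sqrt ((2*((m:ℝ)+2) - 3) * (2*((m:ℝ)+2) - 2)))) / ((m.factorial : ℕ) : ℝ) := by
        gcongr
    _ = _ := by ring
end
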